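/- arXiv:0907.4915 — 3 statements merged into one kernel-verified Lean document; each statement's English description precedes it below -/
import Mathlib

section
/- For any nonnegative measurable function g : 𝒳 → [0,∞), the first regeneration block of the split chain satisfies E_ν[Ξ_1(g)²] = m·( E_π[g(X_0)²] + 2·Σ_{n=1}^∞ E_π[ g(X_0)·g(X_n)·1{T > n} ] ), where on the left the split chain starts from X_0 ~ ν, on the right it starts from X_0 ~ π, m := E_ν τ_1 = 1/(β·π(J)), and T := min{n ≥ 1 : Γ_{n−1} = 1} is the first regeneration time. -/
open MeasureTheory ProbabilityTheory Set ENNReal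

/-- The σ-algebra generated by `X 0, …, X n` and `G 0, …, G (n-1)`
(the past of the split chain just before the regeneration indicator `G n` is drawn). -/
def pastBeforeG {Ω 𝒳 : Type*} [MeasurableSpace 𝒳] (X : ℕ → Ω → 𝒳) (G : ℕ → Ω → Bool)
    (n : ℕ) : MeasurableSpace Ω :=
  (⨆ i ∈ Set.Iic n, MeasurableSpace.comap (X i) inferInstance) ⊔
    (⨆ i ∈ Set.Iio n, MeasurableSpace.comap (G i) inferInstance)

/-- The σ-algebra generated by `X 0, …, X n` and `G 0, …, G n`. -/
def pastXG {Ω 𝒳 : Type*} [MeasurableSpace 𝒳] (X : ℕ → Ω → 𝒳) (G : ℕ → Ω → Bool)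
    (n : ℕ) : MeasurableSpace Ω :=
  (⨆ i ∈ Set.Iic n, MeasurableSpace.comap (X i) inferInstance) ⊔
    (⨆ i ∈ Set.Iic n, MeasurableSpace.comap (G i) inferInstance)

/-- The normalized residualKer kernel `Q(x,·) = (P(x,·) − β·1_J(x)·ν(·)) / (1 − β·1_J(x))`. -/
noncomputable def residualKer {𝒳 : Type*} [MeasurableSpace 𝒳] (P : Kernel 𝒳 𝒳) (J : Set 𝒳)
    (β : ℝ) (ν : Measure 𝒳) (x : 𝒳) (A : Set 𝒳) : ℝ≥0∞ :=
  (P x A - ENNReal.ofReal β * J.indicator (fun _ => (1 : ℝ≥0∞)) x * ν A) /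
    (1 - ENNReal.ofReal β * J.indicator (fun _ => (1 : ℝ≥0∞)) x)

/-- `(X, G)` is a version of the split chain of Nummelin/Athreya–Ney associated to the
kernel `P`, small set `J`, minorization constant `β` and minorizing measure `ν`:
given the past up to `X n`, the regeneration indicator `G n` equals `true` with probability
`β·1_J(X n)`; given the past up to `(X n, G n)`, the next state `X (n+1)` is distributed
according to `ν` if `G n = true` and according to the residualKer kernel `Q(X n, ·)` otherwise.
Moreover (the chain being assumed π-irreducible and recurrent in the paper) regenerations
occur infinitely often almost surely. -/
structure IsSplitChain {Ω 𝒳 : Type*} [MeasurableSpace Ω] [MeasurableSpace 𝒳] (μ : Measure Ω)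
    (P : Kernel 𝒳 𝒳) (J : Set 𝒳) (β : ℝ) (ν : Measure 𝒳)
    (X : ℕ → Ω → 𝒳) (G : ℕ → Ω → Bool) : Prop where
  measX : ∀ n, Measurable (X n)
  measG : ∀ n, Measurable (G n)
  condG : ∀ n, ∀ B : Set Ω, MeasurableSet[pastBeforeG X G n] B →
    μ (B ∩ {ω | G n ω = true}) =
      ∫⁻ ω in B, ENNReal.ofReal β * J.indicator (fun _ => (1 : ℝ≥0∞)) (X n ω) ∂μ
  condX : ∀ n, ∀ A : Set 𝒳, MeasurableSet A → ∀ B : Set Ω, MeasurableSet[pastXG X G n] B →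
    μ (B ∩ (X (n+1)) ⁻¹' A) =
      ∫⁻ ω in B, (if G n ω = true then ν A else residualKer P J β ν (X n ω) A) ∂μ
  recur : ∀ᵐ ω ∂μ, ∀ m : ℕ, ∃ n : ℕ, m < n ∧ G (n - 1) ω = true

/-- The regeneration epochs: `T 0 = 0` and `T k = min{n > T (k-1) : G (n-1) = true}`. -/
noncomputable def regTime {Ω : Type*} (G : ℕ → Ω → Bool) : ℕ → Ω → ℕ
  | 0 => fun _ => 0
  | (k + 1) => fun ω => sInf {n : ℕ | regTime G k ω < n ∧ G (n - 1) ω = true}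

/-- `R(n) = min{r ≥ 1 : T r ≥ n}`, the number of the first regeneration epoch `≥ n`. -/
noncomputable def hitNum {Ω : Type*} (G : ℕ → Ω → Bool) (n : ℕ) (ω : Ω) : ℕ :=
  sInf {r : ℕ | 1 ≤ r ∧ n ≤ regTime G r ω}

/-- The first block sum `Ξ₁(f) = ∑_{i=0}^{T 1 − 1} f (X i)`. -/
noncomputable def blockSum1 {Ω 𝒳 : Type*} (f : 𝒳 → ℝ) (X : ℕ → Ω → 𝒳) (G : ℕ → Ω → Bool)
    (ω : Ω) : ℝ :=
  ∑ i ∈ Finset.range (regTime G 1 ω), f (X i ω)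

/-- The regenerative-sequential estimator
`θ̂_{T_{R(n)}} = (1 / T_{R(n)}) ∑_{i=0}^{T_{R(n)} − 1} f (X i)`. -/
noncomputable def regEstimator {Ω 𝒳 : Type*} (f : 𝒳 → ℝ) (X : ℕ → Ω → 𝒳) (G : ℕ → Ω → Bool)
    (n : ℕ) (ω : Ω) : ℝ :=
  (regTime G (hitNum G n ω) ω : ℝ)⁻¹ *
    ∑ i ∈ Finset.range (regTime G (hitNum G n ω) ω), f (X i ω)

section BlockAux

open Filter

variable {Ω 𝒳 : Type*} [mΩ : MeasurableSpace Ω] [MeasurableSpace 𝒳]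

noncomputable def bfun (J : Set 𝒳) (β : ℝ) (x : 𝒳) : ℝ≥0∞ :=
  ENNReal.ofReal β * J.indicator (fun _ => (1 : ℝ≥0∞)) x

lemma bfun_le_one {J : Set 𝒳} {β : ℝ} (hβ : β ≤ 1) (x : 𝒳) : bfun J β x ≤ 1 := by
  unfold bfun
  by_cases hx : x ∈ J
  · rw [Set.indicator_of_mem hx, mul_one]
    exact ENNReal.ofReal_le_one.mpr hβ
  · rw [Set.indicator_of_notMem hx, mul_zero]
    exact zero_le_one

lemma bfun_ne_top {J : Set 𝒳} {β : ℝ} (x : 𝒳) : bfun J β x ≠ ∞ := by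
  unfold bfun
  by_cases hx : x ∈ J <;> simp [hx]

lemma measurable_bfun {J : Set 𝒳} (hJ : MeasurableSet J) {β : ℝ} :
    Measurable (bfun J β) :=
  measurable_const.mul (measurable_const.indicator hJ)

/-- The measure `A ↦ P(x,A) − β 1_J(x) ν(A)`. -/
noncomputable def resMeas (P : Kernel 𝒳 𝒳) (J : Set 𝒳) (β : ℝ) (ν : Measure 𝒳)
    [IsFiniteMeasure ν]
    (hsm : ∀ x, ∀ A : Set 𝒳, MeasurableSet A → bfun J β x * ν A ≤ P x A) (x : 𝒳) :
    Measure 𝒳 :=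
  Measure.ofMeasurable (fun A _ => P x A - bfun J β x * ν A)
    (by simp)
    (fun f hf hd => by
      have hle : (fun i => bfun J β x * ν (f i)) ≤ fun i => P x (f i) :=
        fun i => hsm x (f i) (hf i)
      have h1 : ∑' i, bfun J β x * ν (f i) = bfun J β x * ν (⋃ i, f i) := by
        rw [ENNReal.tsum_mul_left, measure_iUnion hd hf]
      have hfin : ∑' i, bfun J β x * ν (f i) ≠ ∞ := by
        rw [h1]
        exact ENNReal.mul_ne_top (bfun_ne_top x) (measure_ne_top ν _)
      show (P x) (⋃ i, f i) - bfun J β x * ν (⋃ i, f i) = _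
      rw [ENNReal.tsum_sub hfin hle, h1, measure_iUnion hd hf])

lemma resMeas_apply {P : Kernel 𝒳 𝒳} {J : Set 𝒳} {β : ℝ} {ν : Measure 𝒳}
    [IsFiniteMeasure ν]
    (hsm : ∀ x, ∀ A : Set 𝒳, MeasurableSet A → bfun J β x * ν A ≤ P x A)
    (x : 𝒳) {A : Set 𝒳} (hA : MeasurableSet A) :
    resMeas P J β ν hsm x A = P x A - bfun J β x * ν A :=
  Measure.ofMeasurable_apply A hA

/-- The sub-Markov kernel `K(x,A) = P(x,A) − β 1_J(x) ν(A)`. -/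
noncomputable def resKer (P : Kernel 𝒳 𝒳) (J : Set 𝒳) (β : ℝ) (ν : Measure 𝒳)
    (hJ : MeasurableSet J) [IsFiniteMeasure ν]
    (hsm : ∀ x, ∀ A : Set 𝒳, MeasurableSet A → bfun J β x * ν A ≤ P x A) :
    Kernel 𝒳 𝒳 where
  toFun := resMeas P J β ν hsm
  measurable' := by
    apply Measure.measurable_of_measurable_coe
    intro A hA
    simp only [resMeas_apply hsm _ hA]
    exact (P.measurable_coe hA).sub ((measurable_bfun hJ).mul measurable_const)

lemma resKer_apply {P : Kernel 𝒳 𝒳} {J : Set 𝒳} {β : ℝ} {ν : Measure 𝒳}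
    (hJ : MeasurableSet J) [IsFiniteMeasure ν]
    (hsm : ∀ x, ∀ A : Set 𝒳, MeasurableSet A → bfun J β x * ν A ≤ P x A)
    (x : 𝒳) {A : Set 𝒳} (hA : MeasurableSet A) :
    resKer P J β ν hJ hsm x A = P x A - bfun J β x * ν A :=
  resMeas_apply hsm x hA

lemma isFiniteKernel_resKer {P : Kernel 𝒳 𝒳} [IsMarkovKernel P] {J : Set 𝒳} {β : ℝ}
    {ν : Measure 𝒳} (hJ : MeasurableSet J) [IsFiniteMeasure ν]
    (hsm : ∀ x, ∀ A : Set 𝒳, MeasurableSet A → bfun J β x * ν A ≤ P x A) :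
    IsFiniteKernel (resKer P J β ν hJ hsm) :=
  ⟨⟨1, ENNReal.one_lt_top, fun x => by
    rw [resKer_apply hJ hsm x MeasurableSet.univ]
    exact le_trans tsub_le_self (le_of_eq measure_univ)⟩⟩

lemma resKer_eq_zero {P : Kernel 𝒳 𝒳} [IsMarkovKernel P] {J : Set 𝒳} {β : ℝ}
    {ν : Measure 𝒳} (hJ : MeasurableSet J) [IsProbabilityMeasure ν]
    (hsm : ∀ x, ∀ A : Set 𝒳, MeasurableSet A → bfun J β x * ν A ≤ P x A)
    {x : 𝒳} (hb : bfun J β x = 1) :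
    resKer P J β ν hJ hsm x = 0 := by
  ext A hA
  rw [resKer_apply hJ hsm x hA, hb, one_mul]
  have h1 : ν A ≤ P x A := by have := hsm x A hA; rwa [hb, one_mul] at this
  have h2 : P x A ≤ ν A := by
    have hc := hsm x Aᶜ hA.compl
    rw [hb, one_mul] at hc
    have e1 : P x A + P x Aᶜ = 1 := by
      rw [measure_add_measure_compl hA, measure_univ]
    have e2 : ν A + ν Aᶜ = 1 := by
      rw [measure_add_measure_compl hA, measure_univ]
    calc P x A = 1 - P x Aᶜ := by
          rw [← e1, ENNReal.add_sub_cancel_right (measure_ne_top _ _)]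
      _ ≤ 1 - ν Aᶜ := tsub_le_tsub_left hc 1
      _ = ν A := by rw [← e2, ENNReal.add_sub_cancel_right (measure_ne_top _ _)]
  rw [le_antisymm h2 h1, tsub_self]
  simp

/-- Iterates `ρ K^n`. -/
noncomputable def iterK (K : Kernel 𝒳 𝒳) (ρ : Measure 𝒳) : ℕ → Measure 𝒳
  | 0 => ρ
  | (n+1) => (iterK K ρ n).bind K

/-- `Fiter K d f x = ∫ f dK^d(x,·)`. -/
noncomputable def Fiter (K : Kernel 𝒳 𝒳) : ℕ → (𝒳 → ℝ≥0∞) → 𝒳 → ℝ≥0∞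
  | 0 => fun f => f
  | (d+1) => fun f => Fiter K d (fun x => ∫⁻ y, f y ∂K x)

lemma measurable_kernel_lint (K : Kernel 𝒳 𝒳) [IsSFiniteKernel K] {f : 𝒳 → ℝ≥0∞}
    (hf : Measurable f) : Measurable fun x => ∫⁻ y, f y ∂K x :=
  Measurable.lintegral_kernel_prod_right (hf.comp measurable_snd)

lemma measurable_Fiter (K : Kernel 𝒳 𝒳) [IsSFiniteKernel K] (d : ℕ) {f : 𝒳 → ℝ≥0∞}
    (hf : Measurable f) : Measurable (Fiter K d f) := by
  induction d generalizing f with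
  | zero => exact hf
  | succ d ih => exact ih (measurable_kernel_lint K hf)



section SigmaAlg

variable {X : ℕ → Ω → 𝒳} {G : ℕ → Ω → Bool}

lemma measX_past {n m : ℕ} (hm : m ≤ n) : Measurable[pastBeforeG X G n] (X m) := by
  rw [measurable_iff_comap_le]
  exact le_trans (le_iSup₂ (f := fun i (_ : i ∈ Set.Iic n) =>
    MeasurableSpace.comap (X i) inferInstance) m (Set.mem_Iic.mpr hm)) le_sup_left

lemma measG_past {n i : ℕ} (hi : i < n) : Measurable[pastBeforeG X G n] (G i) := by
  rw [measurable_iff_comap_le]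
  exact le_trans (le_iSup₂ (f := fun j (_ : j ∈ Set.Iio n) =>
    MeasurableSpace.comap (G j) inferInstance) i (Set.mem_Iio.mpr hi)) le_sup_right

lemma measX_pastXG {n m : ℕ} (hm : m ≤ n) : Measurable[pastXG X G n] (X m) := by
  rw [measurable_iff_comap_le]
  exact le_trans (le_iSup₂ (f := fun i (_ : i ∈ Set.Iic n) =>
    MeasurableSpace.comap (X i) inferInstance) m (Set.mem_Iic.mpr hm)) le_sup_left

lemma measG_pastXG {n i : ℕ} (hi : i ≤ n) : Measurable[pastXG X G n] (G i) := by
  rw [measurable_iff_comap_le]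
  exact le_trans (le_iSup₂ (f := fun j (_ : j ∈ Set.Iic n) =>
    MeasurableSpace.comap (G j) inferInstance) i (Set.mem_Iic.mpr hi)) le_sup_right

lemma pastBeforeG_le_pastXG (n : ℕ) : pastBeforeG X G n ≤ pastXG X G n := by
  refine sup_le_sup le_rfl (iSup_le fun i => iSup_le fun hi => ?_)
  exact le_iSup₂ (f := fun j (_ : j ∈ Set.Iic n) =>
    MeasurableSpace.comap (G j) inferInstance) i (Set.mem_Iic.mpr (le_of_lt (Set.mem_Iio.mp hi)))

lemma pastBeforeG_le (hX : ∀ n, Measurable (X n)) (hG : ∀ n, Measurable (G n)) (n : ℕ) :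
    pastBeforeG X G n ≤ mΩ := by
  refine sup_le (iSup₂_le fun i _ => ?_) (iSup₂_le fun i _ => ?_)
  · exact measurable_iff_comap_le.mp (hX i)
  · exact measurable_iff_comap_le.mp (hG i)

lemma pastXG_le (hX : ∀ n, Measurable (X n)) (hG : ∀ n, Measurable (G n)) (n : ℕ) :
    pastXG X G n ≤ mΩ := by
  refine sup_le (iSup₂_le fun i _ => ?_) (iSup₂_le fun i _ => ?_)
  · exact measurable_iff_comap_le.mp (hX i)
  · exact measurable_iff_comap_le.mp (hG i)

end SigmaAlg

noncomputable def noRegen (G : ℕ → Ω → Bool) (n : ℕ) (ω : Ω) : ℝ≥0∞ :=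
  if ∀ i < n, G i ω = false then 1 else 0

section NoRegen

variable {X : ℕ → Ω → 𝒳} {G : ℕ → Ω → Bool}

lemma noRegen_zero (ω : Ω) : noRegen G 0 ω = 1 := by
  unfold noRegen
  rw [if_pos]
  intro i hi
  omega

lemma noRegen_succ (n : ℕ) (ω : Ω) :
    noRegen G (n+1) ω = noRegen G n ω * (if G n ω = false then 1 else 0) := by
  unfold noRegen
  by_cases h1 : ∀ i < n, G i ω = false
  · by_cases h2 : G n ω = false
    · rw [if_pos h1, if_pos h2, mul_one, if_pos]
      intro i hi
      rcases Nat.lt_succ_iff_lt_or_eq.mp hi with h | h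
      · exact h1 i h
      · rw [h]; exact h2
    · rw [if_pos h1, if_neg h2, mul_zero, if_neg]
      intro hall
      exact h2 (hall n (Nat.lt_succ_self n))
  · rw [if_neg h1, zero_mul, if_neg]
    intro hall
    exact h1 fun i hi => hall i (hi.trans (Nat.lt_succ_self n))

lemma noRegen_eq_indicator (n : ℕ) :
    noRegen G n = ({ω : Ω | ∀ i < n, G i ω = false}).indicator (fun _ => (1:ℝ≥0∞)) := by
  funext ω
  by_cases h : ∀ i < n, G i ω = false
  · rw [noRegen, if_pos h, Set.indicator_of_mem (show ω ∈ {ω : Ω | ∀ i < n, G i ω = false} from h)]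
  · rw [noRegen, if_neg h, Set.indicator_of_notMem (show ω ∉ {ω : Ω | ∀ i < n, G i ω = false} from h)]

lemma measurableSet_noRegenSet_past (n : ℕ) :
    MeasurableSet[pastBeforeG X G n] {ω : Ω | ∀ i < n, G i ω = false} := by
  have : {ω : Ω | ∀ i < n, G i ω = false} = ⋂ i ∈ Set.Iio n, (G i) ⁻¹' {false} := by
    ext ω
    simp [Set.mem_iInter]
  rw [this]
  exact MeasurableSet.biInter (Set.to_countable _) fun i hi =>
    (measG_past (X := X) (Set.mem_Iio.mp hi)) (measurableSet_singleton false)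

lemma measurable_noRegen_past (n : ℕ) :
    Measurable[pastBeforeG X G n] (noRegen G n) := by
  rw [noRegen_eq_indicator]
  exact measurable_const.indicator (measurableSet_noRegenSet_past (X := X) n)

lemma measurable_noRegen (hX : ∀ n, Measurable (X n)) (hG : ∀ n, Measurable (G n)) (n : ℕ) :
    Measurable (noRegen G n) :=
  (measurable_noRegen_past (X := X) n).mono (pastBeforeG_le hX hG n) le_rfl

end NoRegen

section Ext

variable {μ : Measure Ω}

lemma setLIntegral_eq_indicator_mul {s : Set Ω} (hs : MeasurableSet s) (h : Ω → ℝ≥0∞) :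
    ∫⁻ ω in s, h ω ∂μ = ∫⁻ ω, s.indicator (fun _ => (1:ℝ≥0∞)) ω * h ω ∂μ := by
  rw [← lintegral_indicator hs]
  refine lintegral_congr fun ω => ?_
  by_cases hω : ω ∈ s
  · rw [Set.indicator_of_mem hω, Set.indicator_of_mem hω, one_mul]
  · rw [Set.indicator_of_notMem hω, Set.indicator_of_notMem hω, zero_mul]

lemma lintegral_mul_congr_of_restrict {Ω' : Type*} {m : MeasurableSpace Ω'}
    [m0 : MeasurableSpace Ω'] {μ : Measure Ω'} (hm : m ≤ m0)
    {u v : Ω' → ℝ≥0∞} (hu : Measurable u) (hv : Measurable v)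
    (h : ∀ s : Set Ω', MeasurableSet[m] s → ∫⁻ ω in s, u ω ∂μ = ∫⁻ ω in s, v ω ∂μ)
    {φ : Ω' → ℝ≥0∞} (hφ : Measurable[m] φ) :
    ∫⁻ ω, φ ω * u ω ∂μ = ∫⁻ ω, φ ω * v ω ∂μ := by
  refine @Measurable.ennreal_induction Ω' m
    (fun φ => ∫⁻ ω, φ ω * u ω ∂μ = ∫⁻ ω, φ ω * v ω ∂μ) ?_ ?_ ?_ φ hφ
  · intro c s hs
    have hs' : MeasurableSet s := hm s hs
    have e : ∀ w : Ω' → ℝ≥0∞, (fun ω => Set.indicator s (fun _ => c) ω * w ω)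
        = fun ω => c * Set.indicator s w ω := by
      intro w
      funext ω
      by_cases hω : ω ∈ s
      · rw [Set.indicator_of_mem hω, Set.indicator_of_mem hω]
      · rw [Set.indicator_of_notMem hω, Set.indicator_of_notMem hω, zero_mul, mul_zero]
    rw [e u, e v, lintegral_const_mul c (hu.indicator hs'), lintegral_const_mul c (hv.indicator hs'),
      lintegral_indicator hs', lintegral_indicator hs', h s hs]
  · intro f g _ hf hg hPf hPg
    have hf' : Measurable f := hf.mono hm le_rfl
    have hg' : Measurable g := hg.mono hm le_rfl
    simp only [Pi.add_apply, add_mul]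
    rw [lintegral_add_left (f := fun ω => f ω * u ω) (hf'.mul hu),
      lintegral_add_left (f := fun ω => f ω * v ω) (hf'.mul hv), hPf, hPg]
  · intro f hfm hmono hPf
    have hf' : ∀ k, Measurable (f k) := fun k => (hfm k).mono hm le_rfl
    have e : ∀ w : Ω' → ℝ≥0∞, (fun ω => (⨆ k, f k ω) * w ω) = fun ω => ⨆ k, f k ω * w ω := by
      intro w
      funext ω
      rw [ENNReal.iSup_mul]
    rw [e u, e v, lintegral_iSup (f := fun k ω => f k ω * u ω) (fun k => (hf' k).mul hu)
        (fun i j hij ω => mul_le_mul_left (hmono hij ω) _),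
      lintegral_iSup (f := fun k ω => f k ω * v ω) (fun k => (hf' k).mul hv)
        (fun i j hij ω => mul_le_mul_left (hmono hij ω) _)]
    exact iSup_congr hPf

lemma cond_lintegral {Ω' : Type*} {m : MeasurableSpace Ω'}
    [m0 : MeasurableSpace Ω'] {μ : Measure Ω'} {Y : Ω' → 𝒳}
    (hY : Measurable Y) {κ : Ω' → Measure 𝒳} (hκ : Measurable κ)
    (h : ∀ A : Set 𝒳, MeasurableSet A → ∀ B : Set Ω', MeasurableSet[m] B →
      μ (B ∩ Y ⁻¹' A) = ∫⁻ ω in B, κ ω A ∂μ)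
    {B : Set Ω'} (hB : MeasurableSet[m] B) {f : 𝒳 → ℝ≥0∞} (hf : Measurable f) :
    ∫⁻ ω in B, f (Y ω) ∂μ = ∫⁻ ω in B, ∫⁻ y, f y ∂κ ω ∂μ := by
  have hmap : (μ.restrict B).map Y = (μ.restrict B).bind κ := by
    ext A hA
    rw [Measure.map_apply hY hA, Measure.restrict_apply (hY hA), Measure.bind_apply hA hκ.aemeasurable,
      Set.inter_comm]
    exact h A hA B hB
  calc ∫⁻ ω in B, f (Y ω) ∂μ = ∫⁻ y, f y ∂((μ.restrict B).map Y) := (lintegral_map hf hY).symm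
    _ = ∫⁻ y, f y ∂((μ.restrict B).bind κ) := by rw [hmap]
    _ = ∫⁻ ω in B, ∫⁻ y, f y ∂κ ω ∂μ := Measure.lintegral_bind hκ.aemeasurable hf.aemeasurable

end Ext

section Chain

variable {μ : Measure Ω} [IsProbabilityMeasure μ] {P : Kernel 𝒳 𝒳} [IsMarkovKernel P]
  {J : Set 𝒳} {β : ℝ} {ν : Measure 𝒳} [IsProbabilityMeasure ν]
  {X : ℕ → Ω → 𝒳} {G : ℕ → Ω → Bool}

lemma condG_false_set (hc : IsSplitChain μ P J β ν X G) (hJ : MeasurableSet J) (hβle : β ≤ 1)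
    (n : ℕ) {B : Set Ω} (hB : MeasurableSet[pastBeforeG X G n] B) :
    μ (B ∩ {ω | G n ω = false}) = ∫⁻ ω in B, (1 - bfun J β (X n ω)) ∂μ := by
  have hBm : MeasurableSet B := pastBeforeG_le hc.measX hc.measG n B hB
  have hbm : Measurable fun ω => bfun J β (X n ω) := (measurable_bfun hJ).comp (hc.measX n)
  have htrue : μ (B ∩ {ω | G n ω = true}) = ∫⁻ ω in B, bfun J β (X n ω) ∂μ := hc.condG n B hB
  have hsplit : μ (B ∩ {ω | G n ω = true}) + μ (B ∩ {ω | G n ω = false}) = μ B := by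
    rw [← measure_union ?hd ?hm]
    · congr 1
      ext ω
      constructor
      · rintro (⟨h1, _⟩ | ⟨h1, _⟩) <;> exact h1
      · intro hω
        rcases Bool.eq_false_or_eq_true (G n ω) with h | h
        · exact Or.inl ⟨hω, h⟩
        · exact Or.inr ⟨hω, h⟩
    case hd =>
      rw [Set.disjoint_iff]
      rintro ω ⟨⟨_, h1⟩, ⟨_, h2⟩⟩
      simp only [Set.mem_setOf_eq] at h1 h2
      rw [h1] at h2
      exact absurd h2 (by simp)
    case hm =>
      exact hBm.inter (show MeasurableSet {ω : Ω | G n ω = false} from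
        (hc.measG n) (measurableSet_singleton false))
  have hint : ∫⁻ ω in B, (1 - bfun J β (X n ω)) ∂μ + ∫⁻ ω in B, bfun J β (X n ω) ∂μ = μ B := by
    rw [← lintegral_add_left (f := fun ω => 1 - bfun J β (X n ω)) (measurable_const.sub hbm)]
    have : ∀ ω, (1 - bfun J β (X n ω)) + bfun J β (X n ω) = 1 :=
      fun ω => tsub_add_cancel_of_le (bfun_le_one hβle _)
    rw [lintegral_congr fun ω => this ω, setLIntegral_one]
  have hfin : ∫⁻ ω in B, bfun J β (X n ω) ∂μ ≠ ∞ := by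
    refine ne_top_of_le_ne_top (measure_ne_top μ B) ?_
    calc ∫⁻ ω in B, bfun J β (X n ω) ∂μ ≤ ∫⁻ _ω in B, 1 ∂μ :=
          lintegral_mono fun ω => bfun_le_one hβle _
      _ = μ B := setLIntegral_one B
  have h2 : μ (B ∩ {ω | G n ω = false}) + ∫⁻ ω in B, bfun J β (X n ω) ∂μ = μ B := by
    rw [← htrue, add_comm]
    exact hsplit
  rw [← hint] at h2
  exact ENNReal.add_left_inj hfin |>.mp h2

lemma condG_false_mul (hc : IsSplitChain μ P J β ν X G) (hJ : MeasurableSet J) (hβle : β ≤ 1)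
    (n : ℕ) {φ : Ω → ℝ≥0∞} (hφ : Measurable[pastBeforeG X G n] φ) :
    ∫⁻ ω, φ ω * (if G n ω = false then 1 else 0) ∂μ
      = ∫⁻ ω, φ ω * (1 - bfun J β (X n ω)) ∂μ := by
  refine lintegral_mul_congr_of_restrict (pastBeforeG_le hc.measX hc.measG n) ?_ ?_ ?_ hφ
  · exact Measurable.ite ((hc.measG n) (measurableSet_singleton false)) measurable_const
      measurable_const
  · exact measurable_const.sub ((measurable_bfun hJ).comp (hc.measX n))
  · intro s hs
    rw [← condG_false_set hc hJ hβle n hs]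
    have : ∀ ω, (if G n ω = false then (1:ℝ≥0∞) else 0)
        = ({ω : Ω | G n ω = false}).indicator (1 : Ω → ℝ≥0∞) ω := by
      intro ω
      by_cases h : G n ω = false <;> simp [Set.indicator_apply, h]
    have hGn : MeasurableSet {ω : Ω | G n ω = false} :=
      (hc.measG n) (measurableSet_singleton false)
    rw [lintegral_congr fun ω => this ω, lintegral_indicator_one hGn,
      Measure.restrict_apply hGn, Set.inter_comm]

end Chain

section Chain2

variable {μ : Measure Ω} [IsProbabilityMeasure μ] {P : Kernel 𝒳 𝒳} [IsMarkovKernel P]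
  {J : Set 𝒳} {β : ℝ} {ν : Measure 𝒳} [IsProbabilityMeasure ν]
  {X : ℕ → Ω → 𝒳} {G : ℕ → Ω → Bool}

lemma condX_lintegral (hc : IsSplitChain μ P J β ν X G) (hJ : MeasurableSet J)
    (hsm : ∀ x, ∀ A : Set 𝒳, MeasurableSet A → bfun J β x * ν A ≤ P x A) (n : ℕ)
    {B : Set Ω} (hB : MeasurableSet[pastXG X G n] B) {f : 𝒳 → ℝ≥0∞} (hf : Measurable f) :
    ∫⁻ ω in B, f (X (n+1) ω) ∂μ
      = ∫⁻ ω in B, (if G n ω = true then ∫⁻ y, f y ∂ν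
          else (1 - bfun J β (X n ω))⁻¹ * ∫⁻ y, f y ∂(resKer P J β ν hJ hsm (X n ω))) ∂μ := by
  set K := resKer P J β ν hJ hsm with hK
  set κ : Ω → Measure 𝒳 :=
    fun ω => if G n ω = true then ν else (1 - bfun J β (X n ω))⁻¹ • K (X n ω) with hκdef
  have hGn : MeasurableSet {ω : Ω | G n ω = true} :=
    (hc.measG n) (measurableSet_singleton true)
  have hκ : Measurable κ := by
    apply Measure.measurable_of_measurable_coe
    intro A hA
    have e : (fun ω => κ ω A) = fun ω => if G n ω = true then ν A
        else (1 - bfun J β (X n ω))⁻¹ * K (X n ω) A := by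
      funext ω
      simp only [hκdef]
      by_cases h : G n ω = true
      · rw [if_pos h, if_pos h]
      · rw [if_neg h, if_neg h, Measure.smul_apply, smul_eq_mul]
    rw [e]
    exact Measurable.ite hGn measurable_const
      ((measurable_const.sub ((measurable_bfun hJ).comp (hc.measX n))).inv.mul
        ((K.measurable_coe hA).comp (hc.measX n)))
  have h : ∀ A : Set 𝒳, MeasurableSet A → ∀ B' : Set Ω, MeasurableSet[pastXG X G n] B' →
      μ (B' ∩ (X (n+1)) ⁻¹' A) = ∫⁻ ω in B', κ ω A ∂μ := by
    intro A hA B' hB'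
    rw [hc.condX n A hA B' hB']
    refine lintegral_congr fun ω => ?_
    simp only [hκdef]
    by_cases h : G n ω = true
    · rw [if_pos h, if_pos h]
    · rw [if_neg h, if_neg h, Measure.smul_apply, smul_eq_mul, hK, resKer_apply hJ hsm _ hA]
      unfold residualKer bfun
      rw [ENNReal.div_eq_inv_mul]
  have key := cond_lintegral (hc.measX (n+1)) hκ h hB hf
  rw [key]
  refine lintegral_congr fun ω => ?_
  simp only [hκdef]
  by_cases h : G n ω = true
  · rw [if_pos h, if_pos h]
  · rw [if_neg h, if_neg h, lintegral_smul_measure, smul_eq_mul]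

lemma inv_mul_resKer (hJ : MeasurableSet J) (hβle : β ≤ 1)
    (hsm : ∀ x, ∀ A : Set 𝒳, MeasurableSet A → bfun J β x * ν A ≤ P x A)
    (x : 𝒳) (f : 𝒳 → ℝ≥0∞) :
    ((1 - bfun J β x)⁻¹ * ∫⁻ y, f y ∂(resKer P J β ν hJ hsm x)) * (1 - bfun J β x)
      = ∫⁻ y, f y ∂(resKer P J β ν hJ hsm x) := by
  by_cases hb : bfun J β x = 1
  · rw [resKer_eq_zero hJ hsm hb, lintegral_zero_measure, mul_zero, zero_mul]
  · have h1 : (1 - bfun J β x) ≠ 0 := by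
      intro h
      exact hb (le_antisymm (bfun_le_one hβle x) (tsub_eq_zero_iff_le.mp h))
    have h2 : (1 - bfun J β x) ≠ ∞ := (lt_of_le_of_lt tsub_le_self ENNReal.one_lt_top).ne
    rw [mul_comm, ← mul_assoc, ENNReal.mul_inv_cancel h1 h2, one_mul]

lemma step_set (hc : IsSplitChain μ P J β ν X G) (hJ : MeasurableSet J) (hβle : β ≤ 1)
    (hsm : ∀ x, ∀ A : Set 𝒳, MeasurableSet A → bfun J β x * ν A ≤ P x A) (n : ℕ)
    {s : Set Ω} (hs : MeasurableSet[pastBeforeG X G n] s) {f : 𝒳 → ℝ≥0∞} (hf : Measurable f) :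
    ∫⁻ ω in s, (if G n ω = false then 1 else 0) * f (X (n+1) ω) ∂μ
      = ∫⁻ ω in s, (∫⁻ y, f y ∂(resKer P J β ν hJ hsm (X n ω))) ∂μ := by
  set K := resKer P J β ν hJ hsm with hK
  have hsm' : MeasurableSet s := pastBeforeG_le hc.measX hc.measG n s hs
  have hGn : MeasurableSet {ω : Ω | G n ω = false} :=
    (hc.measG n) (measurableSet_singleton false)
  have hKf : Measurable fun x => ∫⁻ y, f y ∂(K x) := by
    haveI : IsFiniteKernel K := isFiniteKernel_resKer hJ hsm
    exact measurable_kernel_lint K hf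
  set ψ : Ω → ℝ≥0∞ := fun ω => (1 - bfun J β (X n ω))⁻¹ * ∫⁻ y, f y ∂(K (X n ω)) with hψ
  have hψm' : Measurable[pastBeforeG X G n] ψ :=
    ((measurable_const.sub (measurable_bfun hJ)).inv.mul hKf).comp (measX_past le_rfl)
  -- rewrite LHS as integral over s ∩ {G n = false}
  have ind : ∀ h : Ω → ℝ≥0∞,
      (fun ω => (if G n ω = false then (1:ℝ≥0∞) else 0) * h ω)
        = fun ω => ({ω : Ω | G n ω = false}).indicator h ω := by
    intro h
    funext ω
    by_cases hg : G n ω = false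
    · rw [if_pos hg, one_mul,
        Set.indicator_of_mem (show ω ∈ {ω : Ω | G n ω = false} from hg)]
    · rw [if_neg hg, zero_mul,
        Set.indicator_of_notMem (show ω ∉ {ω : Ω | G n ω = false} from hg)]
  have hBmeas : MeasurableSet[pastXG X G n] ({ω : Ω | G n ω = false} ∩ s) :=
    MeasurableSet.inter ((measG_pastXG (X := X) le_rfl) (measurableSet_singleton false))
      (pastBeforeG_le_pastXG n s hs)
  have e1 : ∫⁻ ω in s, (if G n ω = false then (1:ℝ≥0∞) else 0) * f (X (n+1) ω) ∂μ
      = ∫⁻ ω in {ω : Ω | G n ω = false} ∩ s, f (X (n+1) ω) ∂μ := by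
    rw [lintegral_congr fun ω => congrFun (ind fun ω' => f (X (n+1) ω')) ω,
      lintegral_indicator hGn, Measure.restrict_restrict hGn]
  have e2 : ∫⁻ ω in {ω : Ω | G n ω = false} ∩ s, f (X (n+1) ω) ∂μ
      = ∫⁻ ω in {ω : Ω | G n ω = false} ∩ s, ψ ω ∂μ := by
    rw [condX_lintegral hc hJ hsm n hBmeas hf]
    refine setLIntegral_congr_fun (pastXG_le hc.measX hc.measG n _ hBmeas)
      (fun ω hω => ?_)
    have : ¬ (G n ω = true) := by
      intro h
      have := hω.1
      simp only [Set.mem_setOf_eq] at this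
      rw [h] at this
      exact absurd this (by simp)
    rw [if_neg this]
  have e3 : ∫⁻ ω in {ω : Ω | G n ω = false} ∩ s, ψ ω ∂μ
      = ∫⁻ ω in s, (if G n ω = false then (1:ℝ≥0∞) else 0) * ψ ω ∂μ := by
    rw [lintegral_congr fun ω => congrFun (ind ψ) ω, lintegral_indicator hGn,
      Measure.restrict_restrict hGn]
  rw [e1, e2, e3]
  -- now apply condG_false_mul with φ = indicator s 1 * ψ
  rw [setLIntegral_eq_indicator_mul hsm', setLIntegral_eq_indicator_mul hsm']
  have comm1 : ∀ ω, s.indicator (fun _ => (1:ℝ≥0∞)) ω * ((if G n ω = false then (1:ℝ≥0∞) else 0) * ψ ω)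
      = (s.indicator (fun _ => (1:ℝ≥0∞)) ω * ψ ω) * (if G n ω = false then 1 else 0) := by
    intro ω
    ring
  rw [lintegral_congr comm1]
  have hφm : Measurable[pastBeforeG X G n] fun ω => s.indicator (fun _ => (1:ℝ≥0∞)) ω * ψ ω :=
    (measurable_const.indicator hs).mul hψm'
  rw [condG_false_mul hc hJ hβle n hφm]
  refine lintegral_congr fun ω => ?_
  rw [mul_assoc]
  congr 1
  exact inv_mul_resKer hJ hβle hsm (X n ω) f

lemma step_mul (hc : IsSplitChain μ P J β ν X G) (hJ : MeasurableSet J) (hβle : β ≤ 1)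
    (hsm : ∀ x, ∀ A : Set 𝒳, MeasurableSet A → bfun J β x * ν A ≤ P x A) (n : ℕ)
    {φ : Ω → ℝ≥0∞} (hφ : Measurable[pastBeforeG X G n] φ) {f : 𝒳 → ℝ≥0∞} (hf : Measurable f) :
    ∫⁻ ω, φ ω * ((if G n ω = false then 1 else 0) * f (X (n+1) ω)) ∂μ
      = ∫⁻ ω, φ ω * (∫⁻ y, f y ∂(resKer P J β ν hJ hsm (X n ω))) ∂μ := by
  have hKf : Measurable fun x => ∫⁻ y, f y ∂(resKer P J β ν hJ hsm x) := by
    haveI : IsFiniteKernel (resKer P J β ν hJ hsm) := isFiniteKernel_resKer hJ hsm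
    exact measurable_kernel_lint _ hf
  refine lintegral_mul_congr_of_restrict (pastBeforeG_le hc.measX hc.measG n) ?_ ?_ ?_ hφ
  · exact (Measurable.ite ((hc.measG n) (measurableSet_singleton false)) measurable_const
      measurable_const).mul (hf.comp (hc.measX (n+1)))
  · exact hKf.comp (hc.measX n)
  · intro s hs
    exact step_set hc hJ hβle hsm n hs hf

end Chain2

section Chain3

variable {μ : Measure Ω} [IsProbabilityMeasure μ] {P : Kernel 𝒳 𝒳} [IsMarkovKernel P]
  {J : Set 𝒳} {β : ℝ} {ν : Measure 𝒳} [IsProbabilityMeasure ν]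
  {X : ℕ → Ω → 𝒳} {G : ℕ → Ω → Bool}

lemma lintegral_noRegen (hc : IsSplitChain μ P J β ν X G) (hJ : MeasurableSet J) (hβle : β ≤ 1)
    (hsm : ∀ x, ∀ A : Set 𝒳, MeasurableSet A → bfun J β x * ν A ≤ P x A) (n : ℕ)
    {f : 𝒳 → ℝ≥0∞} (hf : Measurable f) :
    ∫⁻ ω, noRegen G n ω * f (X n ω) ∂μ
      = ∫⁻ x, f x ∂(iterK (resKer P J β ν hJ hsm) (μ.map (X 0)) n) := by
  haveI : IsFiniteKernel (resKer P J β ν hJ hsm) := isFiniteKernel_resKer hJ hsm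
  induction n generalizing f with
  | zero =>
    rw [lintegral_congr fun ω => by rw [noRegen_zero, one_mul]]
    exact (lintegral_map hf (hc.measX 0)).symm
  | succ n ih =>
    have e : ∀ ω, noRegen G (n+1) ω * f (X (n+1) ω)
        = noRegen G n ω * ((if G n ω = false then 1 else 0) * f (X (n+1) ω)) := by
      intro ω
      rw [noRegen_succ, mul_assoc]
    rw [lintegral_congr e, step_mul hc hJ hβle hsm n (measurable_noRegen_past (X := X) n) hf,
      ih (measurable_kernel_lint _ hf)]
    exact (Measure.lintegral_bind (resKer P J β ν hJ hsm).measurable.aemeasurable hf.aemeasurable).symm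

lemma lintegral_noRegen₂ (hc : IsSplitChain μ P J β ν X G) (hJ : MeasurableSet J) (hβle : β ≤ 1)
    (hsm : ∀ x, ∀ A : Set 𝒳, MeasurableSet A → bfun J β x * ν A ≤ P x A) (m d : ℕ)
    {f f' : 𝒳 → ℝ≥0∞} (hf : Measurable f) (hf' : Measurable f') :
    ∫⁻ ω, noRegen G (m+d) ω * (f (X m ω) * f' (X (m+d) ω)) ∂μ
      = ∫⁻ x, f x * Fiter (resKer P J β ν hJ hsm) d f' x ∂(iterK (resKer P J β ν hJ hsm) (μ.map (X 0)) m) := by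
  haveI : IsFiniteKernel (resKer P J β ν hJ hsm) := isFiniteKernel_resKer hJ hsm
  induction d generalizing f' with
  | zero => exact lintegral_noRegen hc hJ hβle hsm m (hf.mul hf')
  | succ d ih =>
    have e : ∀ ω, noRegen G (m+(d+1)) ω * (f (X m ω) * f' (X (m+(d+1)) ω))
        = (noRegen G (m+d) ω * f (X m ω)) *
          ((if G (m+d) ω = false then 1 else 0) * f' (X ((m+d)+1) ω)) := by
      intro ω
      rw [show m+(d+1) = (m+d)+1 from rfl, noRegen_succ]
      ring
    have hφ : Measurable[pastBeforeG X G (m+d)] fun ω => noRegen G (m+d) ω * f (X m ω) :=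
      (measurable_noRegen_past (X := X) (m+d)).mul
        (hf.comp (measX_past (Nat.le_add_right m d)))
    rw [lintegral_congr e, step_mul hc hJ hβle hsm (m+d) hφ hf',
      lintegral_congr fun ω => mul_assoc (noRegen G (m+d) ω) (f (X m ω)) _,
      ih (measurable_kernel_lint _ hf')]
    rfl

end Chain3

section Kac

variable {P : Kernel 𝒳 𝒳} [IsMarkovKernel P] {J : Set 𝒳} {β : ℝ} {ν : Measure 𝒳}
  [IsProbabilityMeasure ν] {π : Measure 𝒳} [IsProbabilityMeasure π]

lemma lintegral_bfun (hJ : MeasurableSet J) (ρ : Measure 𝒳) :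
    ∫⁻ x, bfun J β x ∂ρ = ENNReal.ofReal β * ρ J := by
  unfold bfun
  rw [lintegral_const_mul _ (measurable_const.indicator hJ)]
  congr 1
  have : (J.indicator (fun _ => (1:ℝ≥0∞))) = J.indicator (1 : 𝒳 → ℝ≥0∞) := rfl
  rw [this, lintegral_indicator_one hJ]

lemma pi_step (hinv : Kernel.Invariant P π) (hJ : MeasurableSet J)
    (hsm : ∀ x, ∀ A : Set 𝒳, MeasurableSet A → bfun J β x * ν A ≤ P x A) :
    π = (π.bind (resKer P J β ν hJ hsm)) + (ENNReal.ofReal β * π J) • ν := by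
  ext A hA
  have h0 : π A = (π.bind ⇑P) A := by rw [hinv.def]
  rw [Measure.add_apply, Measure.smul_apply, smul_eq_mul]
  calc π A = (π.bind ⇑P) A := h0
    _ = ∫⁻ x, P x A ∂π := Measure.bind_apply hA P.measurable.aemeasurable
    _ = ∫⁻ x, (resKer P J β ν hJ hsm x A + bfun J β x * ν A) ∂π := by
        refine lintegral_congr fun x => ?_
        rw [resKer_apply hJ hsm x hA, tsub_add_cancel_of_le (hsm x A hA)]
    _ = ∫⁻ x, resKer P J β ν hJ hsm x A ∂π + ∫⁻ x, bfun J β x * ν A ∂π :=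
        lintegral_add_left ((resKer P J β ν hJ hsm).measurable_coe hA) _
    _ = (π.bind (resKer P J β ν hJ hsm)) A + (ENNReal.ofReal β * π J) * ν A := by
        rw [Measure.bind_apply hA (resKer P J β ν hJ hsm).measurable.aemeasurable,
          lintegral_mul_const _ (measurable_bfun hJ), lintegral_bfun hJ π]

lemma iterK_split (hinv : Kernel.Invariant P π) (hJ : MeasurableSet J)
    (hsm : ∀ x, ∀ A : Set 𝒳, MeasurableSet A → bfun J β x * ν A ≤ P x A) (n : ℕ) :
    iterK (resKer P J β ν hJ hsm) π n
      = iterK (resKer P J β ν hJ hsm) π (n+1)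
        + (ENNReal.ofReal β * π J) • iterK (resKer P J β ν hJ hsm) ν n := by
  set K := resKer P J β ν hJ hsm with hK
  induction n with
  | zero => exact pi_step hinv hJ hsm
  | succ n ihn =>
    have e0 : iterK K π (n+1) = (iterK K π n).bind ⇑K := rfl
    have e1 : iterK K π (n+1+1) = (iterK K π (n+1)).bind ⇑K := rfl
    have e2 : iterK K ν (n+1) = (iterK K ν n).bind ⇑K := rfl
    rw [e0, ihn, e1, e2]
    ext A hA
    rw [Measure.bind_apply hA K.measurable.aemeasurable, Measure.add_apply, Measure.smul_apply, smul_eq_mul,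
      Measure.bind_apply hA K.measurable.aemeasurable, Measure.bind_apply hA K.measurable.aemeasurable,
      lintegral_add_measure, lintegral_smul_measure, smul_eq_mul]

lemma pi_telescope (hinv : Kernel.Invariant P π) (hJ : MeasurableSet J)
    (hsm : ∀ x, ∀ A : Set 𝒳, MeasurableSet A → bfun J β x * ν A ≤ P x A) (n : ℕ)
    {A : Set 𝒳} (hA : MeasurableSet A) :
    π A = iterK (resKer P J β ν hJ hsm) π n A
      + (ENNReal.ofReal β * π J) * ∑ j ∈ Finset.range n, iterK (resKer P J β ν hJ hsm) ν j A := by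
  induction n with
  | zero => simp [iterK]
  | succ n ihn =>
    rw [ihn, iterK_split hinv hJ hsm n, Finset.sum_range_succ, Measure.add_apply,
      Measure.smul_apply, smul_eq_mul, mul_add]
    ring

end Kac

section Comb

lemma tsum_ite_lt (t : ℕ) : ∑' n : ℕ, (if n < t then (1:ℝ≥0∞) else 0) = t := by
  rw [tsum_eq_sum (s := Finset.range t) (fun n hn => if_neg (by simpa using hn))]
  rw [Finset.sum_congr rfl fun n hn => if_pos (Finset.mem_range.mp hn), Finset.sum_const,
    Finset.card_range, nsmul_eq_mul, mul_one]

lemma sum_range_eq_tsum_ite (t : ℕ) (c : ℕ → ℝ≥0∞) :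
    ∑ i ∈ Finset.range t, c i = ∑' i : ℕ, (if i < t then (1:ℝ≥0∞) else 0) * c i := by
  rw [tsum_eq_sum (s := Finset.range t)
    (fun n hn => by rw [if_neg (by simpa using hn), zero_mul])]
  exact Finset.sum_congr rfl fun n hn => by rw [if_pos (Finset.mem_range.mp hn), one_mul]

lemma sq_sum_range (t : ℕ) (a : ℕ → ℝ≥0∞) :
    (∑ i ∈ Finset.range t, a i) ^ 2
      = (∑ i ∈ Finset.range t, (a i) ^ 2)
        + 2 * ∑ i ∈ Finset.range t, ∑ j ∈ Finset.range i, a j * a i := by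
  induction t with
  | zero => simp
  | succ t ih =>
    rw [Finset.sum_range_succ, add_sq, ih, Finset.sum_range_succ (fun i => (a i)^2),
      Finset.sum_range_succ (fun i => ∑ j ∈ Finset.range i, a j * a i), ← Finset.sum_mul]
    ring

lemma cross_reindex (t : ℕ) (a : ℕ → ℝ≥0∞) :
    ∑ i ∈ Finset.range t, ∑ j ∈ Finset.range i, a j * a i
      = ∑ j ∈ Finset.range t, ∑ k ∈ Finset.range (t - j - 1), a j * a (j + k + 1) := by
  rw [Finset.sum_sigma' (Finset.range t) (fun i => Finset.range i) (fun i j => a j * a i),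
    Finset.sum_sigma' (Finset.range t) (fun j => Finset.range (t - j - 1))
      (fun j k => a j * a (j + k + 1))]
  refine Finset.sum_nbij' (i := fun p => ⟨p.2, p.1 - p.2 - 1⟩)
    (j := fun p => ⟨p.1 + p.2 + 1, p.1⟩) ?_ ?_ ?_ ?_ ?_
  · rintro ⟨i, j⟩ hp
    simp only [Finset.mem_sigma, Finset.mem_range] at hp ⊢
    omega
  · rintro ⟨j, k⟩ hp
    simp only [Finset.mem_sigma, Finset.mem_range] at hp ⊢
    omega
  · rintro ⟨i, j⟩ hp
    simp only [Finset.mem_sigma, Finset.mem_range] at hp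
    simp only []
    have h1 : j + (i - j - 1) + 1 = i := by omega
    rw [h1]
  · rintro ⟨j, k⟩ hp
    simp only [Finset.mem_sigma, Finset.mem_range] at hp
    simp only []
    have h1 : j + k + 1 - j - 1 = k := by omega
    rw [h1]
  · rintro ⟨i, j⟩ hp
    simp only [Finset.mem_sigma, Finset.mem_range] at hp
    simp only []
    have h1 : j + (i - j - 1) + 1 = i := by omega
    rw [h1]

lemma cross_tsum (t : ℕ) (a : ℕ → ℝ≥0∞) :
    ∑ i ∈ Finset.range t, ∑ j ∈ Finset.range i, a j * a i
      = ∑' j : ℕ, ∑' k : ℕ, (if j + k + 1 < t then (1:ℝ≥0∞) else 0) * (a j * a (j + k + 1)) := by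
  rw [cross_reindex]
  have inner : ∀ j : ℕ, ∑' k : ℕ, (if j + k + 1 < t then (1:ℝ≥0∞) else 0) * (a j * a (j + k + 1))
      = ∑ k ∈ Finset.range (t - j - 1), a j * a (j + k + 1) := by
    intro j
    rw [tsum_eq_sum (s := Finset.range (t - j - 1))
      (fun k hk => by rw [if_neg (by simp only [Finset.mem_range] at hk; omega), zero_mul])]
    exact Finset.sum_congr rfl fun k hk =>
      by rw [if_pos (by simp only [Finset.mem_range] at hk; omega), one_mul]
  rw [tsum_congr inner, tsum_eq_sum (s := Finset.range t) (fun j hj => by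
    rw [show t - j - 1 = 0 from by simp only [Finset.mem_range] at hj; omega]
    simp)]

end Comb

section RegT

variable {G : ℕ → Ω → Bool}

lemma regTime_one_lt_iff {ω : Ω} (hω : ∃ k : ℕ, 0 < k ∧ G (k-1) ω = true) (n : ℕ) :
    n < regTime G 1 ω ↔ ∀ i < n, G i ω = false := by
  have hset : regTime G 1 ω = sInf {k : ℕ | 0 < k ∧ G (k-1) ω = true} := rfl
  obtain ⟨n0, hn0⟩ := hω
  have hne : {k : ℕ | 0 < k ∧ G (k-1) ω = true}.Nonempty := ⟨n0, hn0⟩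
  have hmem := Nat.sInf_mem hne
  rw [hset]
  constructor
  · intro hn i hi
    by_contra hGi
    have hGi' : G i ω = true := by
      revert hGi
      cases G i ω <;> simp
    have hmem2 : i + 1 ∈ {k : ℕ | 0 < k ∧ G (k-1) ω = true} :=
      ⟨Nat.succ_pos i, by simpa using hGi'⟩
    have := Nat.sInf_le hmem2
    omega
  · intro h
    by_contra hn
    push_neg at hn
    have h1 : 0 < sInf {k : ℕ | 0 < k ∧ G (k-1) ω = true} := hmem.1
    have h2 := h (sInf {k : ℕ | 0 < k ∧ G (k-1) ω = true} - 1) (by omega)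
    rw [hmem.2] at h2
    exact absurd h2 (by simp)

lemma noRegen_eq_ite_regTime {ω : Ω} (hω : ∃ k : ℕ, 0 < k ∧ G (k-1) ω = true) (n : ℕ) :
    noRegen G n ω = if n < regTime G 1 ω then 1 else 0 := by
  unfold noRegen
  by_cases h : n < regTime G 1 ω
  · rw [if_pos ((regTime_one_lt_iff hω n).mp h), if_pos h]
  · rw [if_neg (fun hc => h ((regTime_one_lt_iff hω n).mpr hc)), if_neg h]

lemma regTime_cast_eq_tsum {ω : Ω} (hω : ∃ k : ℕ, 0 < k ∧ G (k-1) ω = true) :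
    (regTime G 1 ω : ℝ≥0∞) = ∑' n : ℕ, noRegen G n ω := by
  rw [tsum_congr fun n => noRegen_eq_ite_regTime hω n, tsum_ite_lt]

end RegT

section PiLimit

open Filter Topology

variable {μ : Measure Ω} [IsProbabilityMeasure μ] {P : Kernel 𝒳 𝒳} [IsMarkovKernel P]
  {J : Set 𝒳} {β : ℝ} {ν : Measure 𝒳} [IsProbabilityMeasure ν] {π : Measure 𝒳}
  [IsProbabilityMeasure π] {X : ℕ → Ω → 𝒳} {G : ℕ → Ω → Bool}

lemma iterK_univ_eq (hc : IsSplitChain μ P J β ν X G)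
    (hJ : MeasurableSet J) (hβle : β ≤ 1)
    (hsm : ∀ x, ∀ A : Set 𝒳, MeasurableSet A → bfun J β x * ν A ≤ P x A) (n : ℕ) :
    iterK (resKer P J β ν hJ hsm) (μ.map (X 0)) n Set.univ
      = μ {ω | ∀ i < n, G i ω = false} := by
  have hEmeas : MeasurableSet {ω : Ω | ∀ i < n, G i ω = false} :=
    pastBeforeG_le hc.measX hc.measG n _ (measurableSet_noRegenSet_past (X := X) n)
  have h1 := lintegral_noRegen hc hJ hβle hsm n (f := fun _ => (1:ℝ≥0∞)) measurable_const
  calc iterK (resKer P J β ν hJ hsm) (μ.map (X 0)) n Set.univ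
      = ∫⁻ _x, (1:ℝ≥0∞) ∂(iterK (resKer P J β ν hJ hsm) (μ.map (X 0)) n) := lintegral_one.symm
    _ = ∫⁻ ω, noRegen G n ω * 1 ∂μ := by exact h1.symm
    _ = μ {ω | ∀ i < n, G i ω = false} := by
        rw [lintegral_congr fun ω => mul_one (noRegen G n ω), noRegen_eq_indicator]
        have e : ({ω : Ω | ∀ i < n, G i ω = false}).indicator (fun _ => (1:ℝ≥0∞))
            = ({ω : Ω | ∀ i < n, G i ω = false}).indicator (1 : Ω → ℝ≥0∞) := rfl
        rw [e, lintegral_indicator_one hEmeas]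

lemma iterK_pi_univ_tendsto (hc : IsSplitChain μ P J β ν X G) (hX0 : μ.map (X 0) = π)
    (hJ : MeasurableSet J) (hβle : β ≤ 1)
    (hsm : ∀ x, ∀ A : Set 𝒳, MeasurableSet A → bfun J β x * ν A ≤ P x A) :
    Tendsto (fun n => iterK (resKer P J β ν hJ hsm) π n Set.univ) atTop (𝓝 0) := by
  have hEmeas : ∀ n, MeasurableSet {ω : Ω | ∀ i < n, G i ω = false} := fun n =>
    pastBeforeG_le hc.measX hc.measG n _ (measurableSet_noRegenSet_past (X := X) n)
  have heq : ∀ n, iterK (resKer P J β ν hJ hsm) π n Set.univ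
      = μ {ω | ∀ i < n, G i ω = false} := by
    intro n
    rw [← hX0]
    exact iterK_univ_eq hc hJ hβle hsm n
  have hanti : Antitone (fun n => {ω : Ω | ∀ i < n, G i ω = false}) :=
    fun a b hab ω hω i hi => hω i (lt_of_lt_of_le hi hab)
  have hnull : μ (⋂ n, {ω : Ω | ∀ i < n, G i ω = false}) = 0 := by
    have h0 : μ {ω | ¬ ∀ m : ℕ, ∃ k : ℕ, m < k ∧ G (k-1) ω = true} = 0 := by
      have := hc.recur
      rwa [MeasureTheory.ae_iff] at this
    refine measure_mono_null (fun ω hω => ?_) h0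
    simp only [Set.mem_iInter, Set.mem_setOf_eq] at hω ⊢
    intro hR
    obtain ⟨k, hk, hG⟩ := hR 0
    have := hω k (k-1) (by omega)
    rw [hG] at this
    exact absurd this (by simp)
  have htend := tendsto_measure_iInter_atTop (μ := μ)
    (fun n => (hEmeas n).nullMeasurableSet) hanti ⟨0, measure_ne_top μ _⟩
  rw [hnull] at htend
  exact Filter.Tendsto.congr (fun n => (heq n).symm) htend

lemma pi_eq_smul_sum (hc : IsSplitChain μ P J β ν X G) (hX0 : μ.map (X 0) = π)
    (hinv : Kernel.Invariant P π) (hJ : MeasurableSet J) (hβle : β ≤ 1)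
    (hsm : ∀ x, ∀ A : Set 𝒳, MeasurableSet A → bfun J β x * ν A ≤ P x A) :
    π = (ENNReal.ofReal β * π J) •
      Measure.sum (fun j => iterK (resKer P J β ν hJ hsm) ν j) := by
  set K := resKer P J β ν hJ hsm with hK
  ext A hA
  rw [Measure.smul_apply, Measure.sum_apply _ hA, smul_eq_mul]
  have h1 : Tendsto (fun n => iterK K π n A) atTop (𝓝 0) := by
    have hu := iterK_pi_univ_tendsto hc hX0 hJ hβle hsm
    exact tendsto_of_tendsto_of_tendsto_of_le_of_le tendsto_const_nhds hu
      (fun n => zero_le) (fun n => measure_mono (Set.subset_univ A))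
  have h2 : Tendsto (fun n => (ENNReal.ofReal β * π J) *
      ∑ j ∈ Finset.range n, iterK K ν j A) atTop
      (𝓝 ((ENNReal.ofReal β * π J) * ∑' j, iterK K ν j A)) :=
    ENNReal.Tendsto.const_mul (ENNReal.tendsto_nat_tsum _)
      (Or.inr (ENNReal.mul_ne_top ENNReal.ofReal_ne_top (measure_ne_top π J)))
  have h3 : Tendsto (fun n => iterK K π n A + (ENNReal.ofReal β * π J) *
      ∑ j ∈ Finset.range n, iterK K ν j A) atTop (𝓝 (π A)) := by
    have e : (fun n => iterK K π n A + (ENNReal.ofReal β * π J) *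
        ∑ j ∈ Finset.range n, iterK K ν j A) = fun _ => π A :=
      funext fun n => (pi_telescope hinv hJ hsm n hA).symm
    rw [e]
    exact tendsto_const_nhds
  have h4 := h1.add h2
  rw [zero_add] at h4
  exact tendsto_nhds_unique h3 h4

end PiLimit

end BlockAux


/-- **Proposition 6.1 (block second-moment identity)**: for any nonnegative measurable
`g : 𝒳 → [0,∞)`, with the split chain started from `X 0 ∼ ν` on one side and from the
stationary distribution `X' 0 ∼ π` on the other,
`E_ν[Ξ₁(g)²] = m · (E_π[g(X_0)²] + 2 ∑_{n=1}^∞ E_π[g(X_0) g(X_n) 1{T > n}])`,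
where `m = E_ν τ₁ = 1/(β·π(J))` (Kac's theorem) and `T` is the first regeneration time
(so that `T > n` iff none of `Γ_0, …, Γ_{n−1}` equals 1). -/
theorem block_second_moment_identity
    {Ω Ω' 𝒳 : Type*} [MeasurableSpace Ω] [MeasurableSpace Ω'] [MeasurableSpace 𝒳]
    (μν : Measure Ω) [IsProbabilityMeasure μν]
    (μπ : Measure Ω') [IsProbabilityMeasure μπ]
    (P : Kernel 𝒳 𝒳) [IsMarkovKernel P]
    (π ν : Measure 𝒳) [IsProbabilityMeasure π] [IsProbabilityMeasure ν]
    (hinv : Kernel.Invariant P π)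
    (J : Set 𝒳) (hJmeas : MeasurableSet J) (hJpos : 0 < π J)
    (β : ℝ) (hβpos : 0 < β) (hβle : β ≤ 1)
    (hsmall : ∀ x, ∀ A : Set 𝒳, MeasurableSet A →
      ENNReal.ofReal β * J.indicator (fun _ => (1 : ℝ≥0∞)) x * ν A ≤ P x A)
    (X : ℕ → Ω → 𝒳) (G : ℕ → Ω → Bool)
    (hchain : IsSplitChain μν P J β ν X G)
    (hX0 : μν.map (X 0) = ν)
    (X' : ℕ → Ω' → 𝒳) (G' : ℕ → Ω' → Bool)
    (hchain' : IsSplitChain μπ P J β ν X' G')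
    (hX0' : μπ.map (X' 0) = π)
    (g : 𝒳 → ℝ) (hgmeas : Measurable g) (hgpos : ∀ x, 0 ≤ g x) :
    (∫⁻ ω, (regTime G 1 ω : ℝ≥0∞) ∂μν) = (ENNReal.ofReal β * π J)⁻¹ ∧
    ∫⁻ ω, (ENNReal.ofReal (blockSum1 g X G ω)) ^ 2 ∂μν =
      (∫⁻ ω, (regTime G 1 ω : ℝ≥0∞) ∂μν) *
        ((∫⁻ ω', (ENNReal.ofReal (g (X' 0 ω'))) ^ 2 ∂μπ) +
          2 * ∑' k : ℕ, ∫⁻ ω',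
            ENNReal.ofReal (g (X' 0 ω')) * ENNReal.ofReal (g (X' (k + 1) ω')) *
              (if ∀ i ≤ k, G' i ω' = false then 1 else 0) ∂μπ) := by
  classical
  have hsm : ∀ x, ∀ A : Set 𝒳, MeasurableSet A → bfun J β x * ν A ≤ P x A :=
    fun x A hA => hsmall x A hA
  set K := resKer P J β ν hJmeas hsm with hKdef
  haveI : IsFiniteKernel K := isFiniteKernel_resKer hJmeas hsm
  set a := ENNReal.ofReal β * π J with hadef
  have ha0 : a ≠ 0 := by
    rw [hadef]
    exact mul_ne_zero (ENNReal.ofReal_pos.mpr hβpos).ne' hJpos.ne'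
  have hatop : a ≠ ∞ := by
    rw [hadef]
    exact ENNReal.mul_ne_top ENNReal.ofReal_ne_top (measure_ne_top π J)
  have hpiEq : π = a • Measure.sum (fun j => iterK K ν j) :=
    pi_eq_smul_sum hchain' hX0' hinv hJmeas hβle hsm
  have hlpi : ∀ {h : 𝒳 → ℝ≥0∞}, Measurable h →
      ∫⁻ x, h x ∂π = a * ∑' j, ∫⁻ x, h x ∂(iterK K ν j) := by
    intro h hh
    conv_lhs => rw [hpiEq]
    rw [lintegral_smul_measure, lintegral_sum_measure, smul_eq_mul]
  -- Kac identity
  have hKac : ∫⁻ ω, (regTime G 1 ω : ℝ≥0∞) ∂μν = ∑' j, iterK K ν j Set.univ := by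
    have hae : ∀ᵐ ω ∂μν, (regTime G 1 ω : ℝ≥0∞) = ∑' n, noRegen G n ω := by
      filter_upwards [hchain.recur] with ω hω
      exact regTime_cast_eq_tsum (hω 0)
    rw [lintegral_congr_ae hae, lintegral_tsum
      (fun n => (measurable_noRegen hchain.measX hchain.measG n).aemeasurable)]
    refine tsum_congr fun n => ?_
    have h1 := lintegral_noRegen hchain hJmeas hβle hsm n (f := fun _ => (1:ℝ≥0∞))
      measurable_const
    rw [hX0] at h1
    calc ∫⁻ ω, noRegen G n ω ∂μν = ∫⁻ ω, noRegen G n ω * 1 ∂μν :=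
          lintegral_congr fun ω => (mul_one _).symm
      _ = ∫⁻ x, (1:ℝ≥0∞) ∂(iterK K ν n) := by exact h1
      _ = iterK K ν n Set.univ := lintegral_one
  have hS : a * (∑' j, iterK K ν j Set.univ) = 1 := by
    have h1 : π Set.univ = 1 := measure_univ
    rw [hpiEq, Measure.smul_apply, Measure.sum_apply _ MeasurableSet.univ, smul_eq_mul] at h1
    exact h1
  have hKacFinal : ∫⁻ ω, (regTime G 1 ω : ℝ≥0∞) ∂μν = a⁻¹ := by
    rw [hKac]
    calc (∑' j, iterK K ν j Set.univ) = 1 * ∑' j, iterK K ν j Set.univ := (one_mul _).symm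
      _ = (a⁻¹ * a) * ∑' j, iterK K ν j Set.univ := by
          rw [ENNReal.inv_mul_cancel ha0 hatop]
      _ = a⁻¹ * (a * ∑' j, iterK K ν j Set.univ) := mul_assoc _ _ _
      _ = a⁻¹ := by rw [hS, mul_one]
  refine ⟨hKacFinal, ?_⟩
  -- second moment identity
  set Gf : 𝒳 → ℝ≥0∞ := fun x => ENNReal.ofReal (g x) with hGf
  have hGfm : Measurable Gf := hgmeas.ennreal_ofReal
  set F1 : 𝒳 → ℝ≥0∞ := fun x => ENNReal.ofReal (g x) ^ 2 with hF1
  have hF1m : Measurable F1 := hgmeas.ennreal_ofReal.pow_const 2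
  have hFiterm : ∀ k : ℕ, Measurable (Fiter K (k+1) Gf) := fun k => measurable_Fiter K (k+1) hGfm
  -- a.e. pointwise expansion
  have hae2 : ∀ᵐ ω ∂μν, (ENNReal.ofReal (blockSum1 g X G ω)) ^ 2
      = (∑' i, noRegen G i ω * F1 (X i ω))
        + 2 * ∑' j, ∑' k, noRegen G (j+k+1) ω * (Gf (X j ω) * Gf (X (j+k+1) ω)) := by
    filter_upwards [hchain.recur] with ω hω
    have hex := hω 0
    have e0 : ENNReal.ofReal (blockSum1 g X G ω)
        = ∑ i ∈ Finset.range (regTime G 1 ω), ENNReal.ofReal (g (X i ω)) := by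
      rw [show blockSum1 g X G ω = ∑ i ∈ Finset.range (regTime G 1 ω), g (X i ω) from rfl]
      exact ENNReal.ofReal_sum_of_nonneg fun i _ => hgpos _
    simp only [hGf, hF1]
    rw [e0, sq_sum_range]
    congr 1
    · rw [sum_range_eq_tsum_ite (regTime G 1 ω) (fun i => ENNReal.ofReal (g (X i ω)) ^ 2)]
      refine tsum_congr fun i => ?_
      rw [← noRegen_eq_ite_regTime hex i]
    · congr 1
      rw [cross_tsum (regTime G 1 ω) (fun i => ENNReal.ofReal (g (X i ω)))]
      refine tsum_congr fun j => tsum_congr fun k => ?_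
      rw [← noRegen_eq_ite_regTime hex (j+k+1)]
  -- measurability of pieces
  have hmeas1 : Measurable fun ω => ∑' i, noRegen G i ω * F1 (X i ω) :=
    Measurable.ennreal_tsum fun i => (measurable_noRegen hchain.measX hchain.measG i).mul
      (hF1m.comp (hchain.measX i))
  have hmeasjk : ∀ j k : ℕ, Measurable fun ω =>
      noRegen G (j+k+1) ω * (Gf (X j ω) * Gf (X (j+k+1) ω)) := fun j k =>
    (measurable_noRegen hchain.measX hchain.measG _).mul
      ((hGfm.comp (hchain.measX j)).mul (hGfm.comp (hchain.measX _)))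
  have hmeas2 : Measurable fun ω => ∑' j, ∑' k,
      noRegen G (j+k+1) ω * (Gf (X j ω) * Gf (X (j+k+1) ω)) :=
    Measurable.ennreal_tsum fun j => Measurable.ennreal_tsum fun k => hmeasjk j k
  -- block terms
  have hterm1 : ∀ i : ℕ, ∫⁻ ω, noRegen G i ω * F1 (X i ω) ∂μν
      = ∫⁻ x, F1 x ∂(iterK K ν i) := by
    intro i
    have h1 := lintegral_noRegen hchain hJmeas hβle hsm i hF1m
    rw [hX0] at h1
    exact h1
  have hterm2 : ∀ j k : ℕ, ∫⁻ ω, noRegen G (j+k+1) ω * (Gf (X j ω) * Gf (X (j+k+1) ω)) ∂μν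
      = ∫⁻ x, Gf x * Fiter K (k+1) Gf x ∂(iterK K ν j) := by
    intro j k
    have h1 := lintegral_noRegen₂ hchain hJmeas hβle hsm j (k+1) hGfm hGfm
    rw [hX0] at h1
    exact h1
  -- LHS computation
  have hL : ∫⁻ ω, (ENNReal.ofReal (blockSum1 g X G ω)) ^ 2 ∂μν
      = (∑' i, ∫⁻ x, F1 x ∂(iterK K ν i))
        + 2 * ∑' j, ∑' k, ∫⁻ x, Gf x * Fiter K (k+1) Gf x ∂(iterK K ν j) := by
    rw [lintegral_congr_ae hae2, lintegral_add_left hmeas1, lintegral_const_mul 2 hmeas2,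
      lintegral_tsum (f := fun i ω => noRegen G i ω * F1 (X i ω))
        (fun i => ((measurable_noRegen hchain.measX hchain.measG i).mul
          (hF1m.comp (hchain.measX i))).aemeasurable),
      lintegral_tsum (f := fun j ω => ∑' k, noRegen G (j+k+1) ω * (Gf (X j ω) * Gf (X (j+k+1) ω)))
        (fun j => (Measurable.ennreal_tsum fun k => hmeasjk j k).aemeasurable)]
    congr 1
    · exact tsum_congr hterm1
    · congr 1
      refine tsum_congr fun j => ?_
      rw [lintegral_tsum (f := fun k ω => noRegen G (j+k+1) ω * (Gf (X j ω) * Gf (X (j+k+1) ω)))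
        (fun k => (hmeasjk j k).aemeasurable)]
      exact tsum_congr fun k => hterm2 j k
  -- RHS pieces
  have hR1 : ∫⁻ ω', (ENNReal.ofReal (g (X' 0 ω'))) ^ 2 ∂μπ
      = a * ∑' i, ∫⁻ x, F1 x ∂(iterK K ν i) := by
    calc ∫⁻ ω', (ENNReal.ofReal (g (X' 0 ω'))) ^ 2 ∂μπ
        = ∫⁻ ω', F1 (X' 0 ω') ∂μπ := lintegral_congr fun ω => by simp only [hF1]
      _ = ∫⁻ x, F1 x ∂(μπ.map (X' 0)) := (lintegral_map hF1m (hchain'.measX 0)).symm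
      _ = ∫⁻ x, F1 x ∂π := by rw [hX0']
      _ = a * ∑' i, ∫⁻ x, F1 x ∂(iterK K ν i) := hlpi hF1m
  have hR2 : ∀ k : ℕ, ∫⁻ ω', ENNReal.ofReal (g (X' 0 ω')) * ENNReal.ofReal (g (X' (k + 1) ω')) *
        (if ∀ i ≤ k, G' i ω' = false then 1 else 0) ∂μπ
      = a * ∑' j, ∫⁻ x, Gf x * Fiter K (k+1) Gf x ∂(iterK K ν j) := by
    intro k
    have h1 := lintegral_noRegen₂ hchain' hJmeas hβle hsm 0 (k+1) hGfm hGfm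
    rw [hX0'] at h1
    calc ∫⁻ ω', ENNReal.ofReal (g (X' 0 ω')) * ENNReal.ofReal (g (X' (k + 1) ω')) *
          (if ∀ i ≤ k, G' i ω' = false then 1 else 0) ∂μπ
        = ∫⁻ ω', noRegen G' (0+(k+1)) ω' * (Gf (X' 0 ω') * Gf (X' (0+(k+1)) ω')) ∂μπ := by
          refine lintegral_congr fun ω => ?_
          simp only [hGf, Nat.zero_add]
          have e1 : (if ∀ i ≤ k, G' i ω = false then (1:ℝ≥0∞) else 0)
              = noRegen G' (k+1) ω := by
            unfold noRegen
            refine if_congr ?_ rfl rfl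
            exact forall_congr' fun i => by rw [Nat.lt_succ_iff]
          rw [e1]
          ring
      _ = ∫⁻ x, Gf x * Fiter K (k+1) Gf x ∂(iterK K π 0) := h1
      _ = ∫⁻ x, Gf x * Fiter K (k+1) Gf x ∂π := rfl
      _ = a * ∑' j, ∫⁻ x, Gf x * Fiter K (k+1) Gf x ∂(iterK K ν j) :=
          hlpi (hGfm.mul (hFiterm k))
  have hsum2 : (∑' k : ℕ, ∫⁻ ω', ENNReal.ofReal (g (X' 0 ω')) * ENNReal.ofReal (g (X' (k + 1) ω')) *
        (if ∀ i ≤ k, G' i ω' = false then 1 else 0) ∂μπ)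
      = a * ∑' k : ℕ, ∑' j : ℕ, ∫⁻ x, Gf x * Fiter K (k+1) Gf x ∂(iterK K ν j) := by
    calc (∑' k : ℕ, ∫⁻ ω', ENNReal.ofReal (g (X' 0 ω')) * ENNReal.ofReal (g (X' (k + 1) ω')) *
          (if ∀ i ≤ k, G' i ω' = false then 1 else 0) ∂μπ)
        = ∑' k : ℕ, a * ∑' j : ℕ, ∫⁻ x, Gf x * Fiter K (k+1) Gf x ∂(iterK K ν j) :=
          tsum_congr hR2
      _ = a * ∑' k : ℕ, ∑' j : ℕ, ∫⁻ x, Gf x * Fiter K (k+1) Gf x ∂(iterK K ν j) :=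
          ENNReal.tsum_mul_left
  have hcomm : (∑' k : ℕ, ∑' j : ℕ, ∫⁻ x, Gf x * Fiter K (k+1) Gf x ∂(iterK K ν j))
      = ∑' j : ℕ, ∑' k : ℕ, ∫⁻ x, Gf x * Fiter K (k+1) Gf x ∂(iterK K ν j) :=
    ENNReal.tsum_comm
  rw [hL, hKacFinal, hR1, hsum2, hcomm]
  have hZ : ∀ Z W : ℝ≥0∞, a⁻¹ * (a * Z + 2 * (a * W)) = Z + 2 * W := by
    intro Z W
    rw [show a * Z + 2 * (a * W) = a * (Z + 2 * W) from by ring, ← mul_assoc,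
      ENNReal.inv_mul_cancel ha0 hatop, one_mul]
  exact (hZ _ _).symm
end

section
/- Suppose π is an invariant probability measure for P (πP = π), J ⊆ 𝒳 is measurable, V : 𝒳 → [1,∞) is measurable, λ ∈ (0,1), K < ∞. (a) If the one-step drift condition PV(x) ≤ λV(x) for x ∉ J and PV(x) ≤ K for x ∈ J holds and π(V) < ∞, then π(V) ≤ π(J)·(K − λ)/(1 − λ) ≤ (K − λ)/(1 − λ). (b) If the squared drift condition PV²(x) ≤ λ²V²(x) for x ∉ J and PV²(x) ≤ K² for x ∈ J holds and π(V²) < ∞, then π(V²) ≤ π(J)·(K² − λ²)/(1 − λ²) ≤ (K² − λ²)/(1 − λ²). -/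
open MeasureTheory ProbabilityTheory Set ENNReal


lemma drift_aux {𝒳 : Type*} [MeasurableSpace 𝒳]
    (P : Kernel 𝒳 𝒳) [IsMarkovKernel P]
    (π : Measure 𝒳) [IsProbabilityMeasure π]
    (hinv : Kernel.Invariant P π)
    (J : Set 𝒳) (hJmeas : MeasurableSet J)
    (W : 𝒳 → ℝ) (hWmeas : Measurable W) (hW1 : ∀ x, 1 ≤ W x)
    (a b : ℝ) (ha0 : 0 < a) (ha1 : a < 1)
    (hoff : ∀ x ∉ J, ∫⁻ y, ENNReal.ofReal (W y) ∂(P x) ≤ ENNReal.ofReal (a * W x))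
    (hon : ∀ x ∈ J, ∫⁻ y, ENNReal.ofReal (W y) ∂(P x) ≤ ENNReal.ofReal b)
    (hfin : ∫⁻ x, ENNReal.ofReal (W x) ∂π ≠ ∞) :
    ∫⁻ x, ENNReal.ofReal (W x) ∂π ≤ π J * ENNReal.ofReal ((b - a) / (1 - a)) := by
  set mb := max b 0 with hmb
  have hmb0 : 0 ≤ mb := le_max_right _ _
  have hWE : Measurable fun x => ENNReal.ofReal (W x) :=
    ENNReal.measurable_ofReal.comp hWmeas
  set I := ∫⁻ x, ENNReal.ofReal (W x) ∂π with hI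
  set S := ∫⁻ x in Jᶜ, ENNReal.ofReal (W x) ∂π with hS
  set T := ∫⁻ x in J, ENNReal.ofReal (W x) ∂π with hT
  have hTS : T + S = I := lintegral_add_compl _ hJmeas
  have hSfin : S ≠ ∞ := by
    refine ne_top_of_le_ne_top hfin ?_
    exact setLIntegral_le_lintegral _ _
  have hTfin : T ≠ ∞ := by
    refine ne_top_of_le_ne_top hfin ?_
    exact setLIntegral_le_lintegral _ _
  -- main inequality in ENNReal
  have hmain : I ≤ ENNReal.ofReal mb * π J + ENNReal.ofReal a * S := by
    have h1 : I = ∫⁻ x, ∫⁻ y, ENNReal.ofReal (W y) ∂(P x) ∂π := by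
      rw [hI]
      conv_lhs => rw [← hinv.def]
      exact Measure.lintegral_bind P.measurable.aemeasurable hWE.aemeasurable
    have h2 : ∀ x, ∫⁻ y, ENNReal.ofReal (W y) ∂(P x) ≤
        J.indicator (fun _ => ENNReal.ofReal mb) x
          + Jᶜ.indicator (fun x => ENNReal.ofReal a * ENNReal.ofReal (W x)) x := by
      intro x
      by_cases hx : x ∈ J
      · simp only [indicator_of_mem hx, indicator_of_notMem (by simp [hx] : x ∉ Jᶜ), add_zero]
        exact (hon x hx).trans (ENNReal.ofReal_le_ofReal (le_max_left _ _))
      · simp only [indicator_of_notMem hx, indicator_of_mem (by simp [hx] : x ∈ Jᶜ), zero_add]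
        exact (hoff x hx).trans_eq (ENNReal.ofReal_mul ha0.le)
    calc I = ∫⁻ x, ∫⁻ y, ENNReal.ofReal (W y) ∂(P x) ∂π := h1
      _ ≤ ∫⁻ x, (J.indicator (fun _ => ENNReal.ofReal mb) x
          + Jᶜ.indicator (fun x => ENNReal.ofReal a * ENNReal.ofReal (W x)) x) ∂π :=
        lintegral_mono h2
      _ = ENNReal.ofReal mb * π J + ENNReal.ofReal a * S := by
        rw [lintegral_add_left (measurable_const.indicator hJmeas),
          lintegral_indicator hJmeas, lintegral_indicator hJmeas.compl,
          setLIntegral_const, lintegral_const_mul _ hWE]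
  -- pass to reals
  have hpT : π J ≤ T := by
    rw [hT]
    calc π J = ∫⁻ _ in J, 1 ∂π := by simp
      _ ≤ T := setLIntegral_mono hWE (fun x _ => ENNReal.one_le_ofReal.mpr (hW1 x))
  have hI1 : 1 ≤ I := by
    rw [hI]
    calc (1 : ℝ≥0∞) = ∫⁻ _, 1 ∂π := by simp
      _ ≤ _ := lintegral_mono (fun x => ENNReal.one_le_ofReal.mpr (hW1 x))
  set i := I.toReal with hi
  set s := S.toReal with hs
  set t := T.toReal with ht
  set p := (π J).toReal with hp
  have hpJ : π J ≠ ∞ := measure_ne_top _ _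
  have hitR : i = t + s := by rw [hi, ← hTS, ENNReal.toReal_add hTfin hSfin]
  have hptR : p ≤ t := ENNReal.toReal_mono hTfin hpT
  have hi1R : (1 : ℝ) ≤ i := by
    have := ENNReal.toReal_mono hfin hI1
    simpa using this
  have hmainR : i ≤ mb * p + a * s := by
    have := ENNReal.toReal_mono (by finiteness) hmain
    rwa [ENNReal.toReal_add (by finiteness) (by finiteness), ENNReal.toReal_mul,
      ENNReal.toReal_mul, ENNReal.toReal_ofReal hmb0, ENNReal.toReal_ofReal ha0.le] at this
  have hp0 : 0 ≤ p := ENNReal.toReal_nonneg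
  have ht0 : 0 ≤ t := ENNReal.toReal_nonneg
  have hiR : i ≤ p * ((b - a) / (1 - a)) := by
    by_cases hba : a ≤ b
    · have hmbb : mb = b := max_eq_left (ha0.le.trans hba)
      rw [mul_div_assoc' p, le_div_iff₀ (by linarith)]
      nlinarith
    · exfalso
      have hmba : mb < a := by
        rw [hmb]
        exact max_lt (lt_of_not_ge hba) ha0
      nlinarith
  calc I = ENNReal.ofReal i := (ENNReal.ofReal_toReal hfin).symm
    _ ≤ ENNReal.ofReal (p * ((b - a) / (1 - a))) := ENNReal.ofReal_le_ofReal hiR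
    _ = ENNReal.ofReal p * ENNReal.ofReal ((b - a) / (1 - a)) := by
        rcases le_or_gt 0 ((b - a) / (1 - a)) with h | h
        · exact ENNReal.ofReal_mul hp0
        · rw [ENNReal.ofReal_of_nonpos h.le, mul_zero,
            ENNReal.ofReal_of_nonpos (mul_nonpos_of_nonneg_of_nonpos hp0 h.le)]
    _ = π J * ENNReal.ofReal ((b - a) / (1 - a)) := by rw [ENNReal.ofReal_toReal hpJ]

/-- **Stationary moment bounds from drift**: let `π` be invariant for `P`, `J` measurable,
`V ≥ 1` measurable, `λ ∈ (0,1)`, `K < ∞`.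
(a) If `PV ≤ λV` off `J`, `PV ≤ K` on `J`, and `π(V) < ∞`, then
`π(V) ≤ π(J)(K − λ)/(1 − λ) ≤ (K − λ)/(1 − λ)`.
(b) If `PV² ≤ λ²V²` off `J`, `PV² ≤ K²` on `J`, and `π(V²) < ∞`, then
`π(V²) ≤ π(J)(K² − λ²)/(1 − λ²) ≤ (K² − λ²)/(1 − λ²)`. -/
theorem stationary_moment_bounds_from_drift
    {𝒳 : Type*} [MeasurableSpace 𝒳]
    (P : Kernel 𝒳 𝒳) [IsMarkovKernel P]
    (π : Measure 𝒳) [IsProbabilityMeasure π]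
    (hinv : Kernel.Invariant P π)
    (J : Set 𝒳) (hJmeas : MeasurableSet J)
    (V : 𝒳 → ℝ) (hVmeas : Measurable V) (hV1 : ∀ x, 1 ≤ V x)
    (l K : ℝ) (hl0 : 0 < l) (hl1 : l < 1) :
    ((∀ x ∉ J, ∫⁻ y, ENNReal.ofReal (V y) ∂(P x) ≤ ENNReal.ofReal (l * V x)) →
      (∀ x ∈ J, ∫⁻ y, ENNReal.ofReal (V y) ∂(P x) ≤ ENNReal.ofReal K) →
      (∫⁻ x, ENNReal.ofReal (V x) ∂π ≠ ∞) →
      (∫⁻ x, ENNReal.ofReal (V x) ∂π ≤ π J * ENNReal.ofReal ((K - l) / (1 - l)) ∧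
        π J * ENNReal.ofReal ((K - l) / (1 - l)) ≤ ENNReal.ofReal ((K - l) / (1 - l)))) ∧
    ((∀ x ∉ J,
        ∫⁻ y, ENNReal.ofReal ((V y) ^ 2) ∂(P x) ≤ ENNReal.ofReal (l ^ 2 * (V x) ^ 2)) →
      (∀ x ∈ J, ∫⁻ y, ENNReal.ofReal ((V y) ^ 2) ∂(P x) ≤ ENNReal.ofReal (K ^ 2)) →
      (∫⁻ x, ENNReal.ofReal ((V x) ^ 2) ∂π ≠ ∞) →
      (∫⁻ x, ENNReal.ofReal ((V x) ^ 2) ∂π ≤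
          π J * ENNReal.ofReal ((K ^ 2 - l ^ 2) / (1 - l ^ 2)) ∧
        π J * ENNReal.ofReal ((K ^ 2 - l ^ 2) / (1 - l ^ 2)) ≤
          ENNReal.ofReal ((K ^ 2 - l ^ 2) / (1 - l ^ 2)))) := by
  constructor
  · intro hoff hon hfin
    refine ⟨drift_aux P π hinv J hJmeas V hVmeas hV1 l K hl0 hl1 hoff hon hfin, ?_⟩
    exact mul_le_of_le_one_left zero_le prob_le_one
  · intro hoff hon hfin
    refine ⟨drift_aux P π hinv J hJmeas (fun x => V x ^ 2) (hVmeas.pow_const 2)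
      (fun x => by show (1:ℝ) ≤ V x ^ 2; nlinarith [hV1 x, sq_nonneg (V x - 1)]) (l ^ 2) (K ^ 2) (by positivity)
      (by nlinarith) hoff hon hfin, ?_⟩
    exact mul_le_of_le_one_left zero_le prob_le_one
end

section
/- Let (X_n) be a Markov chain on 𝒳 with transition kernel P satisfying the one-step drift condition PV(x) ≤ λ·V(x) for x ∉ J and PV(x) ≤ K for x ∈ J, where V : 𝒳 → [1,∞) is measurable, λ ∈ (0,1), K < ∞, and J ⊆ 𝒳 is measurable. Let S := min{n ≥ 0 : X_n ∈ J}. Then for every x ∈ 𝒳, H(x) := E_x[ Σ_{n=0}^{S} V(X_n) ] ≤ (V(x) − λ)/(1 − λ); in particular S < ∞ P_x-almost surely and in fact the stronger inequality E_x[V(X_S)]·λ/(1 − λ) + H(x) ≤ V(x)/(1 − λ) holds. -/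
open MeasureTheory ProbabilityTheory Set ENNReal

structure IsMarkovChainWith {Ω 𝒳 : Type*} [MeasurableSpace Ω] [MeasurableSpace 𝒳]
    (μ : Measure Ω) (P : Kernel 𝒳 𝒳) (X : ℕ → Ω → 𝒳) : Prop where
  measX : ∀ n, Measurable (X n)
  markov : ∀ n, ∀ A : Set 𝒳, MeasurableSet A → ∀ B : Set Ω,
    MeasurableSet[⨆ i ∈ Set.Iic n, MeasurableSpace.comap (X i) inferInstance] B →
    μ (B ∩ (X (n + 1)) ⁻¹' A) = ∫⁻ ω in B, P (X n ω) A ∂μ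

lemma markov_lintegral {Ω 𝒳 : Type*} [MeasurableSpace Ω] [MeasurableSpace 𝒳]
    (μ : Measure Ω) (P : Kernel 𝒳 𝒳) [IsMarkovKernel P] (X : ℕ → Ω → 𝒳)
    (hchain : IsMarkovChainWith μ P X) (n : ℕ) (B : Set Ω)
    (hB : MeasurableSet[⨆ i ∈ Set.Iic n, MeasurableSpace.comap (X i) inferInstance] B)
    {f : 𝒳 → ℝ≥0∞} (hf : Measurable f) :
    ∫⁻ ω in B, f (X (n+1) ω) ∂μ = ∫⁻ ω in B, ∫⁻ y, f y ∂(P (X n ω)) ∂μ := by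
  refine Measurable.ennreal_induction
    (motive := fun f => ∫⁻ ω in B, f (X (n+1) ω) ∂μ = ∫⁻ ω in B, ∫⁻ y, f y ∂(P (X n ω)) ∂μ)
    ?_ ?_ ?_ hf
  · intro c A hA
    have h1 : ∀ ω, A.indicator (fun _ => c) (X (n+1) ω)
        = ((X (n+1)) ⁻¹' A).indicator (fun _ => c) ω := by
      intro ω
      by_cases h : X (n+1) ω ∈ A <;> simp [Set.indicator_apply, h]
    calc ∫⁻ ω in B, A.indicator (fun _ => c) (X (n+1) ω) ∂μ
        = ∫⁻ ω in B, ((X (n+1)) ⁻¹' A).indicator (fun _ => c) ω ∂μ := by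
          exact lintegral_congr fun ω => h1 ω
      _ = c * (μ.restrict B) ((X (n+1)) ⁻¹' A) :=
          lintegral_indicator_const ((hchain.measX (n+1)) hA) c
      _ = c * μ (B ∩ (X (n+1)) ⁻¹' A) := by
          rw [Measure.restrict_apply ((hchain.measX (n+1)) hA), Set.inter_comm]
      _ = c * ∫⁻ ω in B, P (X n ω) A ∂μ := by rw [hchain.markov n A hA B hB]
      _ = ∫⁻ ω in B, c * P (X n ω) A ∂μ := by
          have hm : Measurable fun ω => P (X n ω) A :=
            (P.measurable_coe hA).comp (hchain.measX n)
          rw [lintegral_const_mul c hm]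
      _ = ∫⁻ ω in B, ∫⁻ y, A.indicator (fun _ => c) y ∂(P (X n ω)) ∂μ := by
          refine lintegral_congr fun ω => ?_
          rw [lintegral_indicator_const hA c]
  · intro f g hfg hfm hgm hf hg
    simp only [Pi.add_apply]
    have h1 : Measurable fun ω => f (X (n+1) ω) := hfm.comp (hchain.measX (n+1))
    have h2 : Measurable fun ω => ∫⁻ y, f y ∂(P (X n ω)) :=
      (Measurable.lintegral_kernel hfm).comp (hchain.measX n)
    rw [lintegral_add_left h1, hf, hg, ← lintegral_add_left h2]
    refine lintegral_congr fun ω => ?_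
    rw [lintegral_add_left hfm]
  · intro f hfm hmono hf
    simp only [iSup_apply]
    have h1 : ∀ k, Measurable fun ω => f k (X (n+1) ω) :=
      fun k => (hfm k).comp (hchain.measX (n+1))
    have h2 : ∀ k, Measurable fun ω => ∫⁻ y, f k y ∂(P (X n ω)) :=
      fun k => (Measurable.lintegral_kernel (hfm k)).comp (hchain.measX n)
    rw [lintegral_iSup h1 (fun i j hij ω => hmono hij _)]
    simp only [hf]
    have h3 : ∫⁻ ω in B, ∫⁻ y, ⨆ k, f k y ∂(P (X n ω)) ∂μ
        = ∫⁻ ω in B, ⨆ k, ∫⁻ y, f k y ∂(P (X n ω)) ∂μ :=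
      lintegral_congr fun ω => lintegral_iSup hfm hmono
    rw [h3, lintegral_iSup h2 (fun i j hij ω => lintegral_mono fun y => hmono hij y)]

/-- **Hitting-time bound from the drift condition** (inequalities (A.1)–(A.2) of the paper):
under the one-step drift condition `PV ≤ λV` off `J`, `PV ≤ K` on `J` (with `V ≥ 1`,
`λ ∈ (0,1)`), for the chain started at `x`, with `S = min{n ≥ 0 : X n ∈ J}` the first hitting
time of `J`, one has
`H(x) = E_x[∑_{n=0}^{S} V(X_n)] ≤ (V(x) − λ)/(1 − λ)`;
in particular `S < ∞` a.s., and in fact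
`E_x[V(X_S)]·λ/(1 − λ) + H(x) ≤ V(x)/(1 − λ)`.
Here `E_x[∑_{n=0}^{S} V(X_n)]` is written as `∑_{n=0}^∞ E_x[V(X_n)·1{n ≤ S}]` (noting that
`n ≤ S` iff `X m ∉ J` for all `m < n`, and that for `S = ∞` the full sum appears), and
`E_x[V(X_S)]` as `∑_{n=0}^∞ E_x[V(X_n)·1{S = n}]`. -/
theorem drift_hitting_time_bound
    {Ω 𝒳 : Type*} [MeasurableSpace Ω] [MeasurableSpace 𝒳]
    (μ : Measure Ω) [IsProbabilityMeasure μ]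
    (P : Kernel 𝒳 𝒳) [IsMarkovKernel P]
    (J : Set 𝒳) (hJmeas : MeasurableSet J)
    (V : 𝒳 → ℝ) (hVmeas : Measurable V) (hV1 : ∀ x, 1 ≤ V x)
    (l K : ℝ) (hl0 : 0 < l) (hl1 : l < 1)
    (hdrift_off : ∀ x ∉ J, ∫⁻ y, ENNReal.ofReal (V y) ∂(P x) ≤ ENNReal.ofReal (l * V x))
    (hdrift_on : ∀ x ∈ J, ∫⁻ y, ENNReal.ofReal (V y) ∂(P x) ≤ ENNReal.ofReal K)
    (x : 𝒳) (X : ℕ → Ω → 𝒳) (hchain : IsMarkovChainWith μ P X)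
    (hX0 : μ.map (X 0) = Measure.dirac x) :
    (∑' n : ℕ, ∫⁻ ω, ENNReal.ofReal (V (X n ω)) *
        ({ω' : Ω | ∀ m < n, X m ω' ∉ J}.indicator (fun _ => (1 : ℝ≥0∞)) ω) ∂μ) ≤
      ENNReal.ofReal ((V x - l) / (1 - l)) ∧
    (∀ᵐ ω ∂μ, ∃ n : ℕ, X n ω ∈ J) ∧
    (∑' n : ℕ, ∫⁻ ω, ENNReal.ofReal (V (X n ω)) *
          ({ω' : Ω | X n ω' ∈ J ∧ ∀ m < n, X m ω' ∉ J}.indicator (fun _ => (1 : ℝ≥0∞)) ω) ∂μ) *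
        ENNReal.ofReal (l / (1 - l)) +
      (∑' n : ℕ, ∫⁻ ω, ENNReal.ofReal (V (X n ω)) *
          ({ω' : Ω | ∀ m < n, X m ω' ∉ J}.indicator (fun _ => (1 : ℝ≥0∞)) ω) ∂μ) ≤
      ENNReal.ofReal (V x / (1 - l)) := by
  classical
  set l' : ℝ≥0∞ := ENNReal.ofReal l with hl'
  set em : ℝ≥0∞ := ENNReal.ofReal (1 - l) with hem
  have h1l : (0:ℝ) < 1 - l := by linarith
  have hem0 : em ≠ 0 := by
    rw [hem, Ne, ENNReal.ofReal_eq_zero]; linarith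
  have hemtop : em ≠ ∞ := ENNReal.ofReal_ne_top
  have hl'top : l' ≠ ∞ := ENNReal.ofReal_ne_top
  have hl'lt1 : l' < 1 := ENNReal.ofReal_lt_one.mpr hl1
  set C : ℕ → Set Ω := fun n => {ω | ∀ k < n, X k ω ∉ J} with hC
  set D : ℕ → Set Ω := fun n => (X n) ⁻¹' J ∩ C n with hD
  have mC : ∀ n, MeasurableSet (C n) := by
    intro n
    have h : C n = ⋂ k, ⋂ _ : k < n, (X k) ⁻¹' Jᶜ := by
      ext ω; simp [hC, Set.mem_iInter]
    rw [h]
    exact MeasurableSet.iInter fun k => MeasurableSet.iInter fun _ =>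
      (hchain.measX k) hJmeas.compl
  have mD : ∀ n, MeasurableSet (D n) := fun n =>
    ((hchain.measX n) hJmeas).inter (mC n)
  set a : ℕ → ℝ≥0∞ := fun n => ∫⁻ ω in C n, ENNReal.ofReal (V (X n ω)) ∂μ with ha
  set b : ℕ → ℝ≥0∞ := fun n => ∫⁻ ω in D n, ENNReal.ofReal (V (X n ω)) ∂μ with hb
  -- rewrite the integrals in the statement
  have hint_a : ∀ n : ℕ, (∫⁻ ω, ENNReal.ofReal (V (X n ω)) *
      ({ω' : Ω | ∀ m < n, X m ω' ∉ J}.indicator (fun _ => (1 : ℝ≥0∞)) ω) ∂μ) = a n := by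
    intro n
    show _ = ∫⁻ ω in C n, ENNReal.ofReal (V (X n ω)) ∂μ
    rw [← lintegral_indicator (mC n)]
    show ∫⁻ ω, ENNReal.ofReal (V (X n ω)) * ((C n).indicator (fun _ => (1:ℝ≥0∞)) ω) ∂μ = _
    refine lintegral_congr fun ω => ?_
    by_cases h : ω ∈ C n
    · rw [Set.indicator_of_mem h, Set.indicator_of_mem h, mul_one]
    · rw [Set.indicator_of_notMem h, Set.indicator_of_notMem h, mul_zero]
  have hint_b : ∀ n : ℕ, (∫⁻ ω, ENNReal.ofReal (V (X n ω)) *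
      ({ω' : Ω | X n ω' ∈ J ∧ ∀ m < n, X m ω' ∉ J}.indicator (fun _ => (1 : ℝ≥0∞)) ω) ∂μ)
      = b n := by
    intro n
    show _ = ∫⁻ ω in D n, ENNReal.ofReal (V (X n ω)) ∂μ
    rw [← lintegral_indicator (mD n)]
    show ∫⁻ ω, ENNReal.ofReal (V (X n ω)) * ((D n).indicator (fun _ => (1:ℝ≥0∞)) ω) ∂μ = _
    refine lintegral_congr fun ω => ?_
    by_cases h : ω ∈ D n
    · rw [Set.indicator_of_mem h, Set.indicator_of_mem h, mul_one]
    · rw [Set.indicator_of_notMem h, Set.indicator_of_notMem h, mul_zero]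
  have EA : (∑' n : ℕ, ∫⁻ ω, ENNReal.ofReal (V (X n ω)) *
      ({ω' : Ω | ∀ m < n, X m ω' ∉ J}.indicator (fun _ => (1 : ℝ≥0∞)) ω) ∂μ) = ∑' n, a n :=
    tsum_congr hint_a
  have EB : (∑' n : ℕ, ∫⁻ ω, ENNReal.ofReal (V (X n ω)) *
      ({ω' : Ω | X n ω' ∈ J ∧ ∀ m < n, X m ω' ∉ J}.indicator (fun _ => (1 : ℝ≥0∞)) ω) ∂μ)
      = ∑' n, b n := tsum_congr hint_b
  -- basic facts
  have ha0 : a 0 = ENNReal.ofReal (V x) := by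
    have hC0 : C 0 = Set.univ := by ext ω; simp [hC]
    show (∫⁻ ω in C 0, ENNReal.ofReal (V (X 0 ω)) ∂μ) = _
    rw [hC0, Measure.restrict_univ]
    rw [← lintegral_map hVmeas.ennreal_ofReal (hchain.measX 0), hX0,
      lintegral_dirac' x hVmeas.ennreal_ofReal]
  have hCsucc : ∀ n, C (n+1) = C n ∩ (X n) ⁻¹' Jᶜ := by
    intro n
    ext ω
    simp only [hC, Set.mem_setOf_eq, Set.mem_inter_iff, Set.mem_preimage, Set.mem_compl_iff]
    constructor
    · intro h; exact ⟨fun k hk => h k (hk.trans n.lt_succ_self), h n n.lt_succ_self⟩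
    · rintro ⟨h1, h2⟩ k hk
      rcases Nat.lt_succ_iff_lt_or_eq.mp hk with h | h
      · exact h1 k h
      · subst h; exact h2
  have hsplit : ∀ n, a n = (∫⁻ ω in C (n+1), ENNReal.ofReal (V (X n ω)) ∂μ) + b n := by
    intro n
    have hun : C n = C (n+1) ∪ D n := by
      rw [hCsucc, hD]
      ext ω
      simp only [Set.mem_union, Set.mem_inter_iff, Set.mem_preimage, Set.mem_compl_iff]
      constructor
      · intro h
        by_cases hJω : X n ω ∈ J
        · exact Or.inr ⟨hJω, h⟩
        · exact Or.inl ⟨h, hJω⟩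
      · rintro (⟨h, -⟩ | ⟨-, h⟩) <;> exact h
    have hdisj : Disjoint (C (n+1)) (D n) := by
      rw [hCsucc, hD]
      rw [Set.disjoint_left]
      rintro ω ⟨-, h1⟩ ⟨h2, -⟩
      exact h1 h2
    show (∫⁻ ω in C n, ENNReal.ofReal (V (X n ω)) ∂μ) = _ + ∫⁻ ω in D n, ENNReal.ofReal (V (X n ω)) ∂μ
    rw [hun]
    exact lintegral_union (mD n) hdisj
  -- measurability of C (n+1) w.r.t. the past
  have hCF : ∀ n, MeasurableSet[⨆ i ∈ Set.Iic n, MeasurableSpace.comap (X i) inferInstance]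
      (C (n+1)) := by
    intro n
    have h : C (n+1) = ⋂ k, ⋂ _ : k ∈ Set.Iic n, (X k) ⁻¹' Jᶜ := by
      ext ω; simp [hC, Set.mem_iInter, Nat.lt_succ_iff, Set.mem_Iic]
    rw [h]
    refine MeasurableSet.iInter fun k => MeasurableSet.iInter fun hk => ?_
    have hle : MeasurableSpace.comap (X k) inferInstance ≤
        ⨆ i ∈ Set.Iic n, MeasurableSpace.comap (X i) inferInstance :=
      le_biSup (f := fun i => MeasurableSpace.comap (X i) inferInstance) hk
    exact hle _ ⟨Jᶜ, hJmeas.compl, rfl⟩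
  -- the drift step
  have hstep : ∀ n, a (n+1) + l' * b n ≤ l' * a n := by
    intro n
    have hmark : a (n+1) = ∫⁻ ω in C (n+1), ∫⁻ y, ENNReal.ofReal (V y) ∂(P (X n ω)) ∂μ :=
      markov_lintegral μ P X hchain n (C (n+1)) (hCF n) hVmeas.ennreal_ofReal
    have h3 : a (n+1) ≤ l' * ∫⁻ ω in C (n+1), ENNReal.ofReal (V (X n ω)) ∂μ := by
      rw [hmark, ← lintegral_const_mul' _ _ hl'top]
      refine setLIntegral_mono' (mC (n+1)) fun ω hω => ?_
      have hnotJ : X n ω ∉ J := by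
        simp only [hC, Set.mem_setOf_eq] at hω
        exact hω n n.lt_succ_self
      calc ∫⁻ y, ENNReal.ofReal (V y) ∂(P (X n ω))
          ≤ ENNReal.ofReal (l * V (X n ω)) := hdrift_off _ hnotJ
        _ = l' * ENNReal.ofReal (V (X n ω)) := ENNReal.ofReal_mul hl0.le
    calc a (n+1) + l' * b n
        ≤ l' * (∫⁻ ω in C (n+1), ENNReal.ofReal (V (X n ω)) ∂μ) + l' * b n :=
          add_le_add_left h3 _
      _ = l' * ((∫⁻ ω in C (n+1), ENNReal.ofReal (V (X n ω)) ∂μ) + b n) := (mul_add _ _ _).symm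
      _ = l' * a n := by rw [← hsplit n]
  -- geometric decay
  have hdecay : ∀ n, a n ≤ l' ^ n * ENNReal.ofReal (V x) := by
    intro n
    induction n with
    | zero => simp [ha0]
    | succ n ih =>
      calc a (n+1) ≤ a (n+1) + l' * b n := le_self_add
        _ ≤ l' * a n := hstep n
        _ ≤ l' * (l' ^ n * ENNReal.ofReal (V x)) := mul_le_mul_right ih _
        _ = l' ^ (n+1) * ENNReal.ofReal (V x) := by ring
  have ha_ne_top : ∀ n, a n ≠ ∞ := fun n =>
    ne_top_of_le_ne_top (ENNReal.mul_ne_top (ENNReal.pow_ne_top hl'top) ENNReal.ofReal_ne_top)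
      (hdecay n)
  -- partial sums
  have key1 : ∀ N : ℕ, (∑ n ∈ Finset.range (N+1), a n) + l' * (∑ n ∈ Finset.range N, b n)
      ≤ ENNReal.ofReal (V x) + l' * ∑ n ∈ Finset.range N, a n := by
    intro N
    induction N with
    | zero => simp [ha0]
    | succ N ih =>
      have e1 : ∑ n ∈ Finset.range (N+2), a n = ∑ n ∈ Finset.range (N+1), a n + a (N+1) :=
        Finset.sum_range_succ a (N+1)
      have e2 : ∑ n ∈ Finset.range (N+1), b n = ∑ n ∈ Finset.range N, b n + b N :=
        Finset.sum_range_succ b N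
      have e3 : ∑ n ∈ Finset.range (N+1), a n = ∑ n ∈ Finset.range N, a n + a N :=
        Finset.sum_range_succ a N
      rw [e1, e2]
      calc (∑ n ∈ Finset.range (N+1), a n + a (N+1)) + l' * (∑ n ∈ Finset.range N, b n + b N)
          = ((∑ n ∈ Finset.range (N+1), a n) + l' * ∑ n ∈ Finset.range N, b n)
              + (a (N+1) + l' * b N) := by ring
        _ ≤ (ENNReal.ofReal (V x) + l' * ∑ n ∈ Finset.range N, a n) + l' * a N :=
            add_le_add ih (hstep N)
        _ = ENNReal.ofReal (V x) + l' * ∑ n ∈ Finset.range (N+1), a n := by rw [e3]; ring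
  have hA_ne_top : ∀ N : ℕ, (∑ n ∈ Finset.range N, a n) ≠ ∞ := fun N =>
    ENNReal.sum_ne_top.mpr fun n _ => ha_ne_top n
  have key2 : ∀ N : ℕ, em * (∑ n ∈ Finset.range N, a n) + l' * (∑ n ∈ Finset.range N, b n)
      ≤ ENNReal.ofReal (V x) := by
    intro N
    have hAmono : (∑ n ∈ Finset.range N, a n) ≤ ∑ n ∈ Finset.range (N+1), a n :=
      Finset.sum_le_sum_of_subset (Finset.range_subset_range.mpr (Nat.le_succ N))
    have h4 : l' * (∑ n ∈ Finset.range (N+1), a n)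
        + (em * (∑ n ∈ Finset.range (N+1), a n) + l' * ∑ n ∈ Finset.range N, b n)
        ≤ l' * (∑ n ∈ Finset.range (N+1), a n) + ENNReal.ofReal (V x) := by
      calc l' * (∑ n ∈ Finset.range (N+1), a n)
            + (em * (∑ n ∈ Finset.range (N+1), a n) + l' * ∑ n ∈ Finset.range N, b n)
          = (l' + em) * (∑ n ∈ Finset.range (N+1), a n) + l' * ∑ n ∈ Finset.range N, b n := by
            ring
        _ = (∑ n ∈ Finset.range (N+1), a n) + l' * ∑ n ∈ Finset.range N, b n := by
            rw [hl', hem, ← ENNReal.ofReal_add hl0.le h1l.le]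
            norm_num
        _ ≤ ENNReal.ofReal (V x) + l' * ∑ n ∈ Finset.range N, a n := key1 N
        _ ≤ ENNReal.ofReal (V x) + l' * ∑ n ∈ Finset.range (N+1), a n :=
            add_le_add_right (mul_le_mul_right hAmono _) _
        _ = l' * (∑ n ∈ Finset.range (N+1), a n) + ENNReal.ofReal (V x) := add_comm _ _
    have h5 := (ENNReal.add_le_add_iff_left
      (ENNReal.mul_ne_top hl'top (hA_ne_top (N+1)))).mp h4
    calc em * (∑ n ∈ Finset.range N, a n) + l' * (∑ n ∈ Finset.range N, b n)
        ≤ em * (∑ n ∈ Finset.range (N+1), a n) + l' * (∑ n ∈ Finset.range N, b n) :=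
          add_le_add_left (mul_le_mul_right hAmono _) _
      _ ≤ ENNReal.ofReal (V x) := h5
  -- passing to the limit
  have hsum : em * (∑' n, a n) + l' * (∑' n, b n) ≤ ENNReal.ofReal (V x) := by
    rw [ENNReal.tsum_eq_iSup_nat, ENNReal.tsum_eq_iSup_nat, ENNReal.mul_iSup, ENNReal.mul_iSup]
    refine ENNReal.iSup_add_iSup_le fun i j => ?_
    calc em * (∑ n ∈ Finset.range i, a n) + l' * (∑ n ∈ Finset.range j, b n)
        ≤ em * (∑ n ∈ Finset.range (max i j), a n)
          + l' * (∑ n ∈ Finset.range (max i j), b n) :=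
          add_le_add
            (mul_le_mul_right (Finset.sum_le_sum_of_subset
              (Finset.range_subset_range.mpr (le_max_left i j))) _)
            (mul_le_mul_right (Finset.sum_le_sum_of_subset
              (Finset.range_subset_range.mpr (le_max_right i j))) _)
      _ ≤ ENNReal.ofReal (V x) := key2 (max i j)
  -- a.s. hitting
  have hae : ∀ᵐ ω ∂μ, ∃ n : ℕ, X n ω ∈ J := by
    rw [ae_iff]
    have hsub : ∀ n : ℕ, {ω | ¬ ∃ k : ℕ, X k ω ∈ J} ⊆ C n := by
      intro n ω hω
      simp only [hC, Set.mem_setOf_eq]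
      intro k _ hk
      exact hω ⟨k, hk⟩
    have hμC : ∀ n : ℕ, μ {ω | ¬ ∃ k : ℕ, X k ω ∈ J} ≤ l' ^ n * ENNReal.ofReal (V x) := by
      intro n
      refine le_trans (measure_mono (hsub n)) (le_trans ?_ (hdecay n))
      rw [ha, ← setLIntegral_one]
      exact setLIntegral_mono' (mC n) fun ω _ => ENNReal.one_le_ofReal.mpr (hV1 _)
    have htend : Filter.Tendsto (fun n => l' ^ n * ENNReal.ofReal (V x))
        Filter.atTop (nhds 0) := by
      have h := ENNReal.Tendsto.mul_const
        (ENNReal.tendsto_pow_atTop_nhds_zero_of_lt_one hl'lt1)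
        (Or.inr (ENNReal.ofReal_ne_top : ENNReal.ofReal (V x) ≠ ∞))
      simpa using h
    have h0 : μ {ω | ¬ ∃ k : ℕ, X k ω ∈ J} ≤ 0 := ge_of_tendsto' htend hμC
    exact le_antisymm h0 zero_le
  -- B ≥ 1
  have hDdisj : Pairwise (Function.onFun Disjoint D) := by
    have haux : ∀ i j, i < j → Disjoint (D i) (D j) := by
      intro i j hij
      rw [Set.disjoint_left]
      intro ω hi hj
      simp only [hD, hC, Set.mem_inter_iff, Set.mem_preimage, Set.mem_setOf_eq] at hi hj
      exact hj.2 i hij hi.1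
    intro i j hij
    rcases hij.lt_or_gt with h | h
    · exact haux i j h
    · exact (haux j i h).symm
  have hUnion : ⋃ n, D n = {ω | ∃ n : ℕ, X n ω ∈ J} := by
    ext ω
    simp only [Set.mem_iUnion, hD, hC, Set.mem_inter_iff, Set.mem_preimage, Set.mem_setOf_eq]
    constructor
    · rintro ⟨n, hn, -⟩; exact ⟨n, hn⟩
    · intro h
      exact ⟨Nat.find h, Nat.find_spec h, fun k hk => Nat.find_min h hk⟩
  have hμU : μ (⋃ n, D n) = 1 := by
    rw [hUnion]
    have hms : MeasurableSet {ω | ∃ n : ℕ, X n ω ∈ J} := by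
      have h : {ω | ∃ n : ℕ, X n ω ∈ J} = ⋃ n, (X n) ⁻¹' J := by ext ω; simp
      rw [h]; exact MeasurableSet.iUnion fun n => (hchain.measX n) hJmeas
    have hcompl : μ ({ω | ∃ n : ℕ, X n ω ∈ J}ᶜ) = 0 := ae_iff.mp hae
    have h := measure_add_measure_compl (μ := μ) hms
    rw [hcompl, add_zero, measure_univ] at h
    exact h
  have hB1 : (1:ℝ≥0∞) ≤ ∑' n, b n := by
    have h1 : ∀ n, μ (D n) ≤ b n := by
      intro n
      rw [hb, ← setLIntegral_one]
      exact setLIntegral_mono' (mD n) fun ω _ => ENNReal.one_le_ofReal.mpr (hV1 _)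
    calc (1:ℝ≥0∞) = μ (⋃ n, D n) := hμU.symm
      _ = ∑' n, μ (D n) := measure_iUnion hDdisj mD
      _ ≤ ∑' n, b n := ENNReal.tsum_le_tsum h1
  -- first conjunct
  have hfirst : (∑' n, a n) ≤ ENNReal.ofReal ((V x - l) / (1 - l)) := by
    have h1 : em * (∑' n, a n) + l' ≤ ENNReal.ofReal (V x) := by
      calc em * (∑' n, a n) + l' = em * (∑' n, a n) + l' * 1 := by rw [mul_one]
        _ ≤ em * (∑' n, a n) + l' * (∑' n, b n) :=
            add_le_add_right (mul_le_mul_right hB1 l') _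
        _ ≤ ENNReal.ofReal (V x) := hsum
    have h2 : em * (∑' n, a n) ≤ ENNReal.ofReal (V x - l) := by
      rw [ENNReal.ofReal_sub _ hl0.le]
      exact ENNReal.le_sub_of_add_le_right hl'top h1
    rw [ENNReal.ofReal_div_of_pos h1l,
      ENNReal.le_div_iff_mul_le (Or.inl hem0) (Or.inl hemtop)]
    calc (∑' n, a n) * em = em * (∑' n, a n) := mul_comm _ _
      _ ≤ _ := h2
  -- third conjunct
  have hthird : (∑' n, b n) * ENNReal.ofReal (l / (1-l)) + (∑' n, a n)
      ≤ ENNReal.ofReal (V x / (1 - l)) := by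
    rw [ENNReal.ofReal_div_of_pos h1l, ENNReal.ofReal_div_of_pos h1l,
      ENNReal.le_div_iff_mul_le (Or.inl hem0) (Or.inl hemtop)]
    calc ((∑' n, b n) * (l' / em) + (∑' n, a n)) * em
        = (∑' n, b n) * (l' / em) * em + (∑' n, a n) * em := add_mul _ _ _
      _ = (∑' n, b n) * l' + (∑' n, a n) * em := by
          rw [mul_assoc, ENNReal.div_mul_cancel hem0 hemtop]
      _ = em * (∑' n, a n) + l' * (∑' n, b n) := by ring
      _ ≤ ENNReal.ofReal (V x) := hsum
  refine ⟨?_, hae, ?_⟩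
  · rw [EA]; exact hfirst
  · rw [EA, EB]; exact hthird
end
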